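/- arXiv:2310.03506 — 11 statements merged into one kernel-verified Lean document; each statement's English description precedes it below -/
import Mathlib

section
/- For every integer n ≥ 2, the upper total domination number of the path P_n equals 2⌊(n+1)/3⌋. -/
variable {V : Type*}

/-- `S` is a total dominating set of `G`: every vertex has a neighbor in `S`. -/
def isTDSet (G : SimpleGraph V) (S : Set V) : Prop := ∀ v : V, ∃ u ∈ S, G.Adj v u

/-- `S` is a minimal total dominating set of `G`. -/
def isMinTDSet (G : SimpleGraph V) (S : Set V) : Prop :=
  isTDSet G S ∧ ∀ T : Set V, T ⊂ S → ¬ isTDSet G T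

/-- Upper total domination number `Γ_t`. -/
noncomputable def upperTD (G : SimpleGraph V) [Fintype V] : ℕ :=
  sSup {n | ∃ S : Finset V, isMinTDSet G ↑S ∧ S.card = n}

/-- Total domination number `γ_t`. -/
noncomputable def totalDomNum (G : SimpleGraph V) [Fintype V] : ℕ :=
  sInf {n | ∃ S : Finset V, isTDSet G ↑S ∧ S.card = n}

/-- `S` is an open-open irredundant set: each `v ∈ S` has a neighbor not adjacent
to any other vertex of `S`, i.e. `N(v) \ N(S \ {v}) ≠ ∅`. -/
def isOOIrr (G : SimpleGraph V) (S : Set V) : Prop :=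
  ∀ v ∈ S, ∃ w, G.Adj v w ∧ ∀ u ∈ S, u ≠ v → ¬ G.Adj u w

/-- Open-open irredundance number `OOIR`. -/
noncomputable def ooirNum (G : SimpleGraph V) [Fintype V] : ℕ :=
  sSup {n | ∃ S : Finset V, isOOIrr G ↑S ∧ S.card = n}

/-- `M` is an induced matching: a set of edges of `G` whose endpoints induce a
1-regular subgraph (no two distinct edges share or join endpoints). -/
def isInducedMatching (G : SimpleGraph V) (M : Set (Sym2 V)) : Prop :=
  (∀ e ∈ M, e ∈ G.edgeSet) ∧
  ∀ e ∈ M, ∀ f ∈ M, e ≠ f → ∀ u ∈ e, ∀ v ∈ f, u ≠ v ∧ ¬ G.Adj u v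

/-- Induced matching number `ν_I`. -/
noncomputable def inducedMatchingNum (G : SimpleGraph V) [Fintype V] : ℕ :=
  sSup {n | ∃ M : Finset (Sym2 V), isInducedMatching G ↑M ∧ M.card = n}

/-- `L` is a total dominating sequence of `G`. -/
def isTDSeq (G : SimpleGraph V) (L : List V) : Prop :=
  L.Nodup ∧ isTDSet G {v | v ∈ L} ∧
  ∀ (i : ℕ) (h : i < L.length), ∃ w, G.Adj L[i] w ∧ ∀ u ∈ L.take i, ¬ G.Adj u w

/-- Grundy total domination number. -/
noncomputable def grundyTD (G : SimpleGraph V) [Fintype V] : ℕ :=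
  sSup {n | ∃ L : List V, isTDSeq G L ∧ L.length = n}



namespace Stmt1Aux

/-! ### A finite automaton recognising (a superset of) minimal total dominating
sets of paths, encoded as boolean strings, together with a potential-function
argument bounding the weight of any accepted word. -/

abbrev St := Bool × Bool × Bool × Bool

def initSt : St := (true, false, false, false)

def nextSt (st : St) (c : Bool) : St := (st.2.1, c, c && st.1, st.2.2.1)

def okSt (st : St) (c : Bool) : Bool := (st.1 || c) && !(st.2.2.2 && c)

def acceptSt (st : St) : Bool := st.1 && !(st.2.2.1)

def goodSt (st : St) : Bool := (!st.2.2.1 || st.2.1) && (!st.2.2.2 || st.1)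

def c3 : St → ℕ → ℤ
  | (false,false,false,false), r => if r = 0 then -3 else if r = 1 then -2 else -4
  | (false,true,false,false), r => if r = 0 then -3 else if r = 1 then -2 else -1
  | (false,true,true,false), r => if r = 0 then -3 else if r = 1 then 1 else -1
  | (true,false,false,false), r => if r = 0 then 0 else if r = 1 then -2 else -4
  | (true,false,false,true), r => if r = 0 then 0 else if r = 1 then -2 else -1
  | (true,true,false,false), r => if r = 0 then 0 else if r = 1 then -2 else -1
  | (true,true,false,true), r => if r = 0 then 0 else if r = 1 then -2 else 2
  | (true,true,true,false), r => if r = 0 then 0 else if r = 1 then 1 else -1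
  | (true,true,true,true), r => if r = 0 then 0 else if r = 1 then 1 else 2
  | _, _ => 0

lemma step_lem : ∀ st : St, ∀ c : Bool, ∀ r < 3, goodSt st = true → okSt st c = true →
    goodSt (nextSt st c) = true ∧
      c3 st r + (if c then 3 else 0) - 2 ≤ c3 (nextSt st c) ((r+1) % 3) := by decide

lemma accept_lem : ∀ st : St, ∀ r < 3, goodSt st = true → acceptSt st = true →
    c3 st r ≤ (if r = 0 then 0 else if r = 1 then -2 else 2) := by decide

def runS (s : ℕ → Bool) : ℕ → St
  | 0 => initSt
  | p+1 => nextSt (runS s p) (s p)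

def wt (s : ℕ → Bool) (n : ℕ) : ℕ := (Finset.range n).sum fun i => if s i then 1 else 0

lemma dp (s : ℕ → Bool) (n : ℕ) (h : ∀ p < n, okSt (runS s p) (s p) = true) :
    goodSt (runS s n) = true ∧ 3 * (wt s n : ℤ) ≤ 2 * n + c3 (runS s n) (n % 3) := by
  induction n with
  | zero =>
    refine ⟨by rfl, ?_⟩
    simp [wt, runS, initSt, c3]
  | succ p ih =>
    obtain ⟨hg, hle⟩ := ih (fun q hq => h q (by omega))
    have hok := h p (by omega)
    have hstep := step_lem (runS s p) (s p) (p % 3) (by omega) hg hok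
    have hmod : (p+1) % 3 = (p % 3 + 1) % 3 := by omega
    have hrun : runS s (p+1) = nextSt (runS s p) (s p) := rfl
    refine ⟨by rw [hrun]; exact hstep.1, ?_⟩
    have hw : wt s (p+1) = wt s p + (if s p then 1 else 0) := by
      rw [wt, wt, Finset.sum_range_succ]
    rw [hrun, hmod, hw]
    have h2 := hstep.2
    cases hsp : s p <;> simp [hsp] at h2 ⊢ <;> push_cast <;> omega

lemma wordBound (s : ℕ → Bool) (n : ℕ) (h : ∀ p < n, okSt (runS s p) (s p) = true)
    (hacc : acceptSt (runS s n) = true) : wt s n ≤ 2 * ((n+1)/3) := by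
  obtain ⟨hg, hle⟩ := dp s n h
  have hfin := accept_lem (runS s n) (n % 3) (by omega) hg hacc
  have h3 : n % 3 = 0 ∨ n % 3 = 1 ∨ n % 3 = 2 := by omega
  rcases h3 with h3 | h3 | h3 <;> rw [h3] at hfin hle <;> simp at hfin <;> omega

/-! ### Closed form for the run of the automaton -/

def X1 (s : ℕ → Bool) : ℕ → Bool
  | 0 => false
  | p+1 => s p
def X2 (s : ℕ → Bool) : ℕ → Bool
  | 0 => true
  | p+1 => X1 s p
def O2 (s : ℕ → Bool) : ℕ → Bool
  | 0 => false
  | p+1 => s p && X2 s p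
def O3 (s : ℕ → Bool) : ℕ → Bool
  | 0 => false
  | p+1 => O2 s p

lemma runS_eq (s : ℕ → Bool) : ∀ p, runS s p = (X2 s p, X1 s p, O2 s p, O3 s p)
  | 0 => rfl
  | p+1 => by rw [runS, runS_eq s p]; rfl

/-! ### From a minimal total dominating set of a path to an accepted word -/

section Trans
variable {n : ℕ} (S : Finset (Fin n))

def sf : ℕ → Bool := fun i => decide (∃ h : i < n, (⟨i, h⟩ : Fin n) ∈ S)

lemma sf_iff {i : ℕ} (h : i < n) : sf S i = true ↔ (⟨i, h⟩ : Fin n) ∈ S := by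
  simp only [sf, decide_eq_true_eq]
  exact ⟨fun ⟨h', hm⟩ => hm, fun hm => ⟨h, hm⟩⟩

variable (hS : isMinTDSet (SimpleGraph.pathGraph n) ↑S)
include hS

lemma hdom : ∀ i < n, ∃ j, j < n ∧ sf S j = true ∧ (i + 1 = j ∨ j + 1 = i) := by
  intro i hi
  obtain ⟨u, huS, hadj⟩ := hS.1 ⟨i, hi⟩
  rw [SimpleGraph.pathGraph_adj] at hadj
  exact ⟨u.val, u.isLt, (sf_iff S u.isLt).mpr (by simpa using huS), by simpa using hadj⟩

lemma hpriv : ∀ i, (h : i < n) → sf S i = true →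
    ∃ z, z < n ∧ (i + 1 = z ∨ z + 1 = i) ∧
      ∀ j, (hj : j < n) → sf S j = true → j ≠ i → ¬(j + 1 = z ∨ z + 1 = j) := by
  intro i hi hsi
  have hv : (⟨i, hi⟩ : Fin n) ∈ S := (sf_iff S hi).mp hsi
  set v : Fin n := ⟨i, hi⟩
  have hT : (↑S \ {v} : Set (Fin n)) ⊂ ↑S := by
    constructor
    · exact Set.diff_subset
    · intro hsub
      exact (hsub (by exact_mod_cast hv)).2 rfl
  have hnt := hS.2 _ hT
  rw [isTDSet] at hnt
  push_neg at hnt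
  obtain ⟨z, hz⟩ := hnt
  obtain ⟨u, huS, hadj⟩ := hS.1 z
  have huv : u = v := by
    by_contra hne
    exact hz u ⟨huS, hne⟩ hadj
  subst huv
  rw [SimpleGraph.pathGraph_adj] at hadj
  refine ⟨z.val, z.isLt, by simpa using hadj.symm, ?_⟩
  intro j hj hsj hji hadj'
  have hjS : (⟨j, hj⟩ : Fin n) ∈ S := (sf_iff S hj).mp hsj
  refine hz ⟨j, hj⟩ ⟨by exact_mod_cast hjS, ?_⟩ ?_
  · simp only [Set.mem_singleton_iff]
    intro hh
    exact hji (by simpa [v, Fin.ext_iff] using hh)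
  · rw [SimpleGraph.pathGraph_adj]
    simp only [Fin.val_mk]
    omega

lemma hok : ∀ p < n, okSt (runS (sf S) p) (sf S p) = true := by
  intro p hp
  rw [runS_eq]
  show ((X2 (sf S) p || sf S p) && !(O3 (sf S) p && sf S p)) = true
  rw [Bool.and_eq_true, Bool.or_eq_true, Bool.not_eq_true', Bool.and_eq_false_iff]
  constructor
  · -- domination part
    match p, hp with
    | 0, _ => exact Or.inl rfl
    | 1, hp =>
      obtain ⟨j, hj, hsj, hc⟩ := hdom S hS 0 (by omega)
      have : j = 1 := by omega
      subst this
      exact Or.inr hsj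
    | (q+2), hp =>
      cases hsq : sf S q with
      | true => exact Or.inl hsq
      | false =>
        obtain ⟨j, hj, hsj, hc⟩ := hdom S hS (q+1) (by omega)
        have : j = q ∨ j = q + 2 := by omega
        rcases this with h | h
        · rw [h] at hsj; rw [hsq] at hsj; exact absurd hsj (by simp)
        · subst h; exact Or.inr hsj
  · -- privacy part
    match p, hp with
    | 0, _ => exact Or.inl rfl
    | 1, _ => exact Or.inl rfl
    | (q+2), hp =>
      show O2 (sf S) (q+1) = false ∨ _
      cases hO : O2 (sf S) (q+1) with
      | false => exact Or.inl rfl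
      | true =>
        right
        have hO' : sf S q = true ∧ X2 (sf S) q = true := by
          simpa [O2] using hO
        obtain ⟨z, hzn, hzadj, hblock⟩ := hpriv S hS q (by omega) hO'.1
        cases hsp : sf S (q+2) with
        | false => rfl
        | true =>
          exfalso
          rcases hzadj with h | h
          · -- z = q+1
            exact hblock (q+2) (by omega) hsp (by omega) (by omega)
          · -- z + 1 = q, so q ≥ 1
            have hq1 : 1 ≤ q := by omega
            match q, hq1, hO'.2, hblock, h with
            | 1, _, hX2, _, _ => simp [X2, X1] at hX2
            | (r+2), _, hX2, hblock, h =>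
              have hsr : sf S r = true := by simpa [X2, X1] using hX2
              exact hblock r (by omega) hsr (by omega) (by omega)

lemma hacc (hn : 2 ≤ n) : acceptSt (runS (sf S) n) = true := by
  rw [runS_eq]
  obtain ⟨m, rfl⟩ : ∃ m, n = m + 2 := ⟨n - 2, by omega⟩
  show (X2 (sf S) (m+2) && !(O2 (sf S) (m+2))) = true
  rw [Bool.and_eq_true, Bool.not_eq_true']
  constructor
  · -- X2 (m+2) = sf S m
    obtain ⟨j, hj, hsj, hc⟩ := hdom S hS (m+1) (by omega)
    have : j = m := by omega
    subst this
    simpa [X2, X1] using hsj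
  · show (sf S (m+1) && X2 (sf S) (m+1)) = false
    cases hsm : sf S (m+1) with
    | false => simp
    | true =>
      cases hX : X2 (sf S) (m+1) with
      | false => simp [hX]
      | true =>
        exfalso
        have hm1 : 1 ≤ m := by
          rcases m with _ | k
          · simp [X2, X1] at hX
          · omega
        obtain ⟨k, rfl⟩ : ∃ k, m = k + 1 := ⟨m - 1, by omega⟩
        have hsk : sf S k = true := by simpa [X2, X1] using hX
        obtain ⟨z, hzn, hzadj, hblock⟩ := hpriv S hS (k+2) (by omega) hsm
        have hz : z = k + 1 := by omega
        subst hz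
        exact hblock k (by omega) hsk (by omega) (by omega)

lemma hwt : wt (sf S) n = S.card := by
  rw [wt, ← Fin.sum_univ_eq_sum_range]
  have : ∀ v : Fin n, (if sf S v.val then (1:ℕ) else 0) = if v ∈ S then 1 else 0 := by
    intro v
    congr 1
    rw [eq_iff_iff, ← sf_iff S v.isLt]
  rw [Finset.sum_congr rfl (fun v _ => this v), Finset.sum_ite_mem,
    Finset.univ_inter, Finset.card_eq_sum_ones]

end Trans

/-! ### Explicit minimal total dominating sets of maximum size -/

lemma cnt1 : ∀ m : ℕ, ((Finset.range m).filter (fun i => i % 3 ≤ 1)).card = m - m / 3 := by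
  intro m
  induction m with
  | zero => simp
  | succ k ih =>
    rw [Finset.range_add_one, Finset.filter_insert]
    by_cases h : k % 3 ≤ 1
    · rw [if_pos h, Finset.card_insert_of_notMem (by simp), ih]
      omega
    · rw [if_neg h, ih]
      omega

lemma cnt2 : ∀ m : ℕ, ((Finset.range m).filter (fun i => ¬(i % 3 = 0))).card = m - (m + 2) / 3 := by
  intro m
  induction m with
  | zero => simp
  | succ k ih =>
    rw [Finset.range_add_one, Finset.filter_insert]
    by_cases h : ¬(k % 3 = 0)
    · rw [if_pos h, Finset.card_insert_of_notMem (by simp), ih]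
      omega
    · rw [if_neg h, ih]
      omega

lemma card_eq {n : ℕ} (P : ℕ → Prop) [DecidablePred P] :
    (Finset.univ.filter (fun v : Fin n => P v.val)).card = ((Finset.range n).filter P).card := by
  rw [Finset.card_filter, Finset.card_filter, ← Fin.sum_univ_eq_sum_range]

lemma constrA {n : ℕ} (hn : 2 ≤ n) (h3 : n % 3 ≠ 1) :
    ∃ S : Finset (Fin n), isMinTDSet (SimpleGraph.pathGraph n) ↑S ∧ S.card = 2 * ((n+1)/3) := by
  refine ⟨Finset.univ.filter (fun v : Fin n => v.val % 3 ≤ 1), ⟨?_, ?_⟩, ?_⟩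
  · -- total dominating
    intro v
    have hv := v.isLt
    by_cases hv0 : v.val % 3 = 0
    · refine ⟨⟨v.val + 1, by omega⟩, ?_, ?_⟩
      · simp only [Finset.coe_filter, Set.mem_setOf_eq, Finset.mem_univ, true_and]
        omega
      · rw [SimpleGraph.pathGraph_adj]; simp
    · refine ⟨⟨v.val - 1, by omega⟩, ?_, ?_⟩
      · simp only [Finset.coe_filter, Set.mem_setOf_eq, Finset.mem_univ, true_and]
        omega
      · rw [SimpleGraph.pathGraph_adj]
        simp only [Fin.val_mk]
        omega
  · -- minimal
    intro T hT hTDS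
    obtain ⟨v, hvS, hvT⟩ := Set.exists_of_ssubset hT
    have hv := v.isLt
    have hvS' : v.val % 3 ≤ 1 := by simpa using hvS
    by_cases hv0 : v.val % 3 = 0
    · obtain ⟨u, huT, hadj⟩ := hTDS ⟨v.val + 1, by omega⟩
      have hu3 : u.val % 3 ≤ 1 := by simpa using hT.1 huT
      rw [SimpleGraph.pathGraph_adj] at hadj
      simp only [Fin.val_mk] at hadj
      have hne : u.val ≠ v.val := fun h => hvT ((Fin.ext h : u = v) ▸ huT)
      omega
    · have hv1 : v.val % 3 = 1 := by omega
      obtain ⟨u, huT, hadj⟩ := hTDS ⟨v.val - 1, by omega⟩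
      have hu3 : u.val % 3 ≤ 1 := by simpa using hT.1 huT
      rw [SimpleGraph.pathGraph_adj] at hadj
      simp only [Fin.val_mk] at hadj
      have hne : u.val ≠ v.val := fun h => hvT ((Fin.ext h : u = v) ▸ huT)
      omega
  · rw [card_eq (fun i => i % 3 ≤ 1), cnt1]
    omega

lemma constrB {n : ℕ} (hn : 2 ≤ n) (h3 : n % 3 = 1) :
    ∃ S : Finset (Fin n), isMinTDSet (SimpleGraph.pathGraph n) ↑S ∧ S.card = 2 * ((n+1)/3) := by
  refine ⟨Finset.univ.filter (fun v : Fin n => ¬(v.val % 3 = 0)), ⟨?_, ?_⟩, ?_⟩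
  · intro v
    have hv := v.isLt
    by_cases hv1 : v.val % 3 = 1
    · refine ⟨⟨v.val + 1, by omega⟩, ?_, ?_⟩
      · simp only [Finset.coe_filter, Set.mem_setOf_eq, Finset.mem_univ, true_and]
        omega
      · rw [SimpleGraph.pathGraph_adj]; simp
    · by_cases hv00 : v.val = 0
      · refine ⟨⟨1, by omega⟩, ?_, ?_⟩
        · simp only [Finset.coe_filter, Set.mem_setOf_eq, Finset.mem_univ, true_and]
          omega
        · rw [SimpleGraph.pathGraph_adj]
          simp only [Fin.val_mk]
          omega
      · refine ⟨⟨v.val - 1, by omega⟩, ?_, ?_⟩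
        · simp only [Finset.coe_filter, Set.mem_setOf_eq, Finset.mem_univ, true_and]
          omega
        · rw [SimpleGraph.pathGraph_adj]
          simp only [Fin.val_mk]
          omega
  · intro T hT hTDS
    obtain ⟨v, hvS, hvT⟩ := Set.exists_of_ssubset hT
    have hv := v.isLt
    have hvS' : ¬(v.val % 3 = 0) := by simpa using hvS
    by_cases hv1 : v.val % 3 = 1
    · obtain ⟨u, huT, hadj⟩ := hTDS ⟨v.val + 1, by omega⟩
      have hu3 : ¬(u.val % 3 = 0) := by simpa using hT.1 huT
      rw [SimpleGraph.pathGraph_adj] at hadj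
      simp only [Fin.val_mk] at hadj
      have hne : u.val ≠ v.val := fun h => hvT ((Fin.ext h : u = v) ▸ huT)
      omega
    · obtain ⟨u, huT, hadj⟩ := hTDS ⟨v.val - 1, by omega⟩
      have hu3 : ¬(u.val % 3 = 0) := by simpa using hT.1 huT
      rw [SimpleGraph.pathGraph_adj] at hadj
      simp only [Fin.val_mk] at hadj
      have hne : u.val ≠ v.val := fun h => hvT ((Fin.ext h : u = v) ▸ huT)
      omega
  · rw [card_eq (fun i => ¬(i % 3 = 0)), cnt2]
    omega

end Stmt1Aux

/-- For `n ≥ 2`, `Γ_t(P_n) = 2⌊(n+1)/3⌋`. -/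
theorem stmt1 (n : ℕ) (hn : 2 ≤ n) :
    upperTD (SimpleGraph.pathGraph n) = 2 * ((n + 1) / 3) := by
  classical
  have hex : ∃ S : Finset (Fin n),
      isMinTDSet (SimpleGraph.pathGraph n) ↑S ∧ S.card = 2 * ((n + 1) / 3) := by
    by_cases h3 : n % 3 = 1
    · exact Stmt1Aux.constrB hn h3
    · exact Stmt1Aux.constrA hn h3
  obtain ⟨S0, hS0, hc0⟩ := hex
  rw [upperTD]
  apply le_antisymm
  · refine csSup_le ⟨2 * ((n + 1) / 3), S0, hS0, hc0⟩ ?_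
    rintro m ⟨S, hS, rfl⟩
    rw [← Stmt1Aux.hwt S hS]
    exact Stmt1Aux.wordBound _ n (Stmt1Aux.hok S hS) (Stmt1Aux.hacc S hS hn)
  · apply le_csSup
    · refine ⟨n, ?_⟩
      rintro m ⟨S, hS, rfl⟩
      simpa using Finset.card_le_univ S
    · exact ⟨S0, hS0, hc0⟩
end

section
/- If G is an isolate-free graph, then every minimal total dominating set of G is an open-open irredundant set; consequently Γ_t(G) ≤ OOIR(G). -/
variable {V : Type*}

/-- In an isolate-free graph every minimal TD-set is open-open irredundant;
consequently `Γ_t(G) ≤ OOIR(G)`. -/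
theorem stmt2 [Fintype V] (G : SimpleGraph V) (hG : ∀ v : V, ∃ w, G.Adj v w) :
    (∀ S : Set V, isMinTDSet G S → isOOIrr G S) ∧ upperTD G ≤ ooirNum G := by
  have h1 : ∀ S : Set V, isMinTDSet G S → isOOIrr G S := by
    intro S hS v hv
    have hsub : S \ {v} ⊂ S := Set.sdiff_singleton_ssubset.mpr hv
    have hnot := hS.2 _ hsub
    rw [isTDSet] at hnot
    push_neg at hnot
    obtain ⟨w, hw⟩ := hnot
    obtain ⟨u, hu, huw⟩ := hS.1 w
    have huv : u = v := by
      by_contra h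
      exact hw u ⟨hu, by simpa using h⟩ huw
    subst huv
    refine ⟨w, G.adj_symm huw, ?_⟩
    intro x hx hxv hadj
    exact hw x ⟨hx, by simpa using hxv⟩ (G.adj_symm hadj)
  refine ⟨h1, ?_⟩
  rcases Set.eq_empty_or_nonempty {n | ∃ S : Finset V, isMinTDSet G ↑S ∧ S.card = n} with he | hne
  · rw [upperTD, he, csSup_empty]
    exact Nat.zero_le _
  · refine csSup_le_csSup ⟨Fintype.card V, fun n hn => ?_⟩ hne ?_
    · obtain ⟨S, _, hc⟩ := hn
      exact hc ▸ (S.card_le_univ.trans_eq Finset.card_univ)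
    · rintro n ⟨S, hS, hc⟩
      exact ⟨S, h1 _ hS, hc⟩
end

section
/- If G is an isolate-free graph and M is an induced matching in G, then the set of endpoints of the edges of M is an open-open irredundant set; consequently 2·ν_I(G) ≤ OOIR(G), where ν_I(G) is the induced matching number. -/
variable {V : Type*}

lemma part1 (G : SimpleGraph V) (M : Set (Sym2 V)) (hM : isInducedMatching G M) :
    isOOIrr G {v | ∃ e ∈ M, v ∈ e} := by
  rintro v ⟨e, he, hv⟩
  induction e with
  | _ x y =>
    rcases Sym2.mem_iff.mp hv with rfl | rfl
    · refine ⟨y, (G.mem_edgeSet).mp (hM.1 _ he), ?_⟩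
      rintro u ⟨f, hf, hu⟩ hne
      by_cases hef : f = s(v, y)
      · subst hef
        rcases Sym2.mem_iff.mp hu with rfl | rfl
        · exact absurd rfl hne
        · exact G.loopless.irrefl u
      · intro hadj
        exact (hM.2 _ he _ hf (Ne.symm hef) y (Sym2.mem_mk_right _ _) u hu).2 hadj.symm
    · refine ⟨x, ((G.mem_edgeSet).mp (hM.1 _ he)).symm, ?_⟩
      rintro u ⟨f, hf, hu⟩ hne
      by_cases hef : f = s(x, v)
      · subst hef
        rcases Sym2.mem_iff.mp hu with rfl | rfl
        · exact G.loopless.irrefl u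
        · exact absurd rfl hne
      · intro hadj
        exact (hM.2 _ he _ hf (Ne.symm hef) x (Sym2.mem_mk_left _ _) u hu).2 hadj.symm

lemma part2 [Fintype V] (G : SimpleGraph V) (M' : Finset (Sym2 V))
    (hM : isInducedMatching G ↑M') :
    ∃ S : Finset V, isOOIrr G ↑S ∧ S.card = 2 * M'.card := by
  classical
  refine ⟨M'.biUnion (fun e => {e.out.1, e.out.2}), ?_, ?_⟩
  · have hset : (↑(M'.biUnion (fun e => ({e.out.1, e.out.2} : Finset V))) : Set V)
        = {v | ∃ e ∈ (↑M' : Set (Sym2 V)), v ∈ e} := by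
      ext v
      simp only [Finset.coe_biUnion, Set.mem_iUnion, Finset.mem_coe, Finset.mem_insert,
        Finset.mem_singleton, Set.mem_setOf_eq]
      constructor
      · rintro ⟨e, he, h | h⟩
        · exact ⟨e, he, h ▸ e.out_fst_mem⟩
        · exact ⟨e, he, h ▸ e.out_snd_mem⟩
      · rintro ⟨e, he, hv⟩
        refine ⟨e, he, ?_⟩
        have : e = s(e.out.1, e.out.2) := by rw [Sym2.mk, e.out_eq]
        rw [this] at hv
        rcases Sym2.mem_iff.mp hv with h | h <;> simp [h]
    rw [hset]
    exact part1 G _ hM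
  · rw [Finset.card_biUnion, Finset.sum_congr rfl, mul_comm, Finset.sum_const, smul_eq_mul]
    · intro e he
      have hne : e.out.1 ≠ e.out.2 := by
        intro h
        have hd : e.IsDiag := by
          rw [show e = s(e.out.1, e.out.2) by rw [Sym2.mk, e.out_eq], Sym2.mk_isDiag_iff]
          exact h
        exact (SimpleGraph.not_isDiag_of_mem_edgeSet G (hM.1 e (by simpa using he))) hd
      rw [Finset.card_insert_of_notMem (by simpa using hne), Finset.card_singleton]
    · intro e he f hf hef
      simp only [Finset.disjoint_left, Finset.mem_insert, Finset.mem_singleton]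
      rintro a (rfl | rfl) hb
      · rcases hb with h | h
        · exact (hM.2 e (by simpa using he) f (by simpa using hf) hef e.out.1 e.out_fst_mem
            f.out.1 f.out_fst_mem).1 h
        · exact (hM.2 e (by simpa using he) f (by simpa using hf) hef e.out.1 e.out_fst_mem
            f.out.2 f.out_snd_mem).1 h
      · rcases hb with h | h
        · exact (hM.2 e (by simpa using he) f (by simpa using hf) hef e.out.2 e.out_snd_mem
            f.out.1 f.out_fst_mem).1 h
        · exact (hM.2 e (by simpa using he) f (by simpa using hf) hef e.out.2 e.out_snd_mem
            f.out.2 f.out_snd_mem).1 h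


/-- The endpoint set of an induced matching is open-open irredundant;
consequently `2·ν_I(G) ≤ OOIR(G)`. -/
theorem stmt3 [Fintype V] (G : SimpleGraph V) (hG : ∀ v : V, ∃ w, G.Adj v w)
    (M : Set (Sym2 V)) (hM : isInducedMatching G M) :
    isOOIrr G {v | ∃ e ∈ M, v ∈ e} ∧
    2 * inducedMatchingNum G ≤ ooirNum G := by
  classical
  refine ⟨part1 G M hM, ?_⟩
  have hbdd : BddAbove {n | ∃ M : Finset (Sym2 V), isInducedMatching G ↑M ∧ M.card = n} := by
    refine ⟨Fintype.card (Sym2 V), ?_⟩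
    rintro n ⟨M', _, rfl⟩
    exact Finset.card_le_univ M'
  have hne : (∅ : Finset (Sym2 V)).card ∈
      {n | ∃ M : Finset (Sym2 V), isInducedMatching G ↑M ∧ M.card = n} := by
    exact ⟨∅, ⟨by simp, by simp⟩, rfl⟩
  have hmem := Nat.sSup_mem ⟨_, hne⟩ hbdd
  obtain ⟨M', hM', hcard⟩ := hmem
  obtain ⟨S, hS, hScard⟩ := part2 G M' hM'
  have hbdd2 : BddAbove {n | ∃ S : Finset V, isOOIrr G ↑S ∧ S.card = n} := by
    refine ⟨Fintype.card V, ?_⟩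
    rintro n ⟨S', _, rfl⟩
    exact Finset.card_le_univ S'
  calc 2 * inducedMatchingNum G = S.card := by rw [hScard, hcard]; rfl
    _ ≤ ooirNum G := le_csSup hbdd2 ⟨S, hS, rfl⟩
end

section
/- If G is an isolate-free bipartite graph, then OOIR(G) = 2·ν_I(G), i.e., the open-open irredundance number equals twice the induced matching number. -/
variable {V : Type*}

section Aux

noncomputable def sym2Fin [DecidableEq V] (e : Sym2 V) : Finset V :=
  Sym2.lift ⟨fun a b => {a, b}, fun a b => Finset.pair_comm a b⟩ e

lemma mem_sym2Fin [DecidableEq V] {e : Sym2 V} {v : V} : v ∈ sym2Fin e ↔ v ∈ e := by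
  induction e using Sym2.ind with
  | _ a b => simp [sym2Fin, Sym2.mem_iff]

lemma card_sym2Fin [DecidableEq V] {e : Sym2 V} (h : ¬ e.IsDiag) : (sym2Fin e).card = 2 := by
  induction e using Sym2.ind with
  | _ a b =>
    have : a ≠ b := by simpa using h
    simp [sym2Fin, Finset.card_pair this]

lemma ooir_bddAbove (G : SimpleGraph V) [Fintype V] :
    BddAbove {n | ∃ S : Finset V, isOOIrr G ↑S ∧ S.card = n} := by
  refine ⟨Fintype.card V, fun n hn => ?_⟩
  obtain ⟨S, -, rfl⟩ := hn
  exact S.card_le_univ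

lemma im_bddAbove (G : SimpleGraph V) [Fintype V] :
    BddAbove {n | ∃ M : Finset (Sym2 V), isInducedMatching G ↑M ∧ M.card = n} := by
  classical
  refine ⟨Fintype.card (Sym2 V), fun n hn => ?_⟩
  obtain ⟨M, -, rfl⟩ := hn
  exact M.card_le_univ

lemma ooir_nonempty (G : SimpleGraph V) [Fintype V] :
    {n | ∃ S : Finset V, isOOIrr G ↑S ∧ S.card = n}.Nonempty :=
  ⟨0, ∅, by simp [isOOIrr], by simp⟩

lemma im_nonempty (G : SimpleGraph V) [Fintype V] :
    {n | ∃ M : Finset (Sym2 V), isInducedMatching G ↑M ∧ M.card = n}.Nonempty :=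
  ⟨0, ∅, by simp [isInducedMatching], by simp⟩

/-- Lower bound direction: from an induced matching get an OO-irredundant set. -/
lemma lower_aux (G : SimpleGraph V) [Fintype V] (M : Finset (Sym2 V))
    (hM : isInducedMatching G ↑M) :
    ∃ S : Finset V, isOOIrr G ↑S ∧ S.card = 2 * M.card := by
  classical
  refine ⟨M.biUnion sym2Fin, ?_, ?_⟩
  · intro v hv
    simp only [Finset.coe_biUnion, Set.mem_iUnion, Finset.mem_coe] at hv
    obtain ⟨e, heM, hve⟩ := hv
    have hve' : v ∈ e := mem_sym2Fin.mp hve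
    have heE : e ∈ G.edgeSet := hM.1 e (by exact_mod_cast heM)
    set w := Sym2.Mem.other hve' with hw
    have hspec : s(v, w) = e := Sym2.other_spec hve'
    have hwe : w ∈ e := Sym2.other_mem hve'
    have hadj : G.Adj v w := by
      rw [← hspec] at heE; exact heE
    refine ⟨w, hadj, ?_⟩
    intro u hu hune
    simp only [Finset.coe_biUnion, Set.mem_iUnion, Finset.mem_coe] at hu
    obtain ⟨f, hfM, huf⟩ := hu
    have huf' : u ∈ f := mem_sym2Fin.mp huf
    by_cases hef : f = e
    · subst hef
      rw [← hspec, Sym2.mem_iff] at huf'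
      rcases huf' with rfl | rfl
      · exact absurd rfl hune
      · exact G.irrefl
    · exact (hM.2 f (by exact_mod_cast hfM) e (by exact_mod_cast heM) hef u huf' w hwe).2
  · rw [Finset.card_biUnion, Finset.sum_congr rfl (fun e he => card_sym2Fin
      (G.not_isDiag_of_mem_edgeSet (hM.1 e (by exact_mod_cast he)))), Finset.sum_const,
      smul_eq_mul, mul_comm]
    intro e he f hf hef
    rw [Function.onFun, Finset.disjoint_left]
    intro a hae haf
    rw [mem_sym2Fin] at hae haf
    exact ((hM.2 e (by exact_mod_cast he) f (by exact_mod_cast hf) hef a hae a haf).1 rfl)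

end Aux

lemma fin2_aux : ∀ i a b : Fin 2, a ≠ i → b ≠ i → a = b := by decide

lemma upper_aux (G : SimpleGraph V) [Fintype V] (c : G.Coloring (Fin 2)) (i : Fin 2)
    (S : Finset V) (hS : isOOIrr G ↑S) :
    ∃ M : Finset (Sym2 V), isInducedMatching G ↑M ∧
      M.card = (S.filter (fun v => c v = i)).card := by
  classical
  set f : V → V := fun v =>
    if h : ∃ w, G.Adj v w ∧ ∀ u ∈ (S : Set V), u ≠ v → ¬ G.Adj u w then h.choose else v with hfdef
  have hfp : ∀ v ∈ S, G.Adj v (f v) ∧ ∀ u ∈ S, u ≠ v → ¬ G.Adj u (f v) := by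
    intro v hv
    have h := hS v (by exact_mod_cast hv)
    have hfv : f v = h.choose := by simp only [hfdef]; exact dif_pos h
    rw [hfv]
    obtain ⟨h1, h2⟩ := h.choose_spec
    exact ⟨h1, fun u hu hne => h2 u (by exact_mod_cast hu) hne⟩
  set A := S.filter (fun v => c v = i) with hA
  have hAmem : ∀ v ∈ A, v ∈ S ∧ c v = i := fun v hv => by simpa [hA] using hv
  have hadj : ∀ v ∈ A, G.Adj v (f v) := fun v hv => (hfp v (hAmem v hv).1).1
  have hpriv : ∀ v ∈ A, ∀ u ∈ S, u ≠ v → ¬ G.Adj u (f v) :=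
    fun v hv => (hfp v (hAmem v hv).1).2
  have hci : ∀ v ∈ A, c v = i := fun v hv => (hAmem v hv).2
  have hcf : ∀ v ∈ A, c (f v) ≠ i := by
    intro v hv h
    exact c.valid (hadj v hv) (by rw [hci v hv, h])
  have fin2 : ∀ a b : Fin 2, a ≠ i → b ≠ i → a = b := fun a b => fin2_aux i a b
  refine ⟨A.image (fun v => s(v, f v)), ⟨?_, ?_⟩, ?_⟩
  · intro e he
    simp only [Finset.coe_image, Set.mem_image, Finset.mem_coe] at he
    obtain ⟨v, hv, rfl⟩ := he
    exact hadj v hv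
  · intro e he f' hf' hef u hue w hwf
    simp only [Finset.coe_image, Set.mem_image, Finset.mem_coe] at he hf'
    obtain ⟨v, hv, rfl⟩ := he
    obtain ⟨v', hv', rfl⟩ := hf'
    have hne : v ≠ v' := by rintro rfl; exact hef rfl
    rw [Sym2.mem_iff] at hue hwf
    rcases hue with rfl | rfl <;> rcases hwf with rfl | rfl
    · exact ⟨hne, fun h => c.valid h (by rw [hci u hv, hci w hv'])⟩
    · refine ⟨fun h => hcf v' hv' (by rw [← h, hci u hv]), ?_⟩
      exact hpriv v' hv' u (hAmem u hv).1 hne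
    · refine ⟨fun h => hcf v hv (by rw [h, hci w hv']), ?_⟩
      exact fun h => hpriv v hv w (hAmem w hv').1 hne.symm h.symm
    · refine ⟨?_, ?_⟩
      · intro h
        exact hpriv v hv v' (hAmem v' hv').1 hne.symm (by rw [h]; exact hadj v' hv')
      · intro h
        exact c.valid h (fin2 _ _ (hcf v hv) (hcf v' hv'))
  · rw [Finset.card_image_of_injOn]
    intro v hv v' hv' hvv'
    simp only [Finset.mem_coe] at hv hv'
    rw [Sym2.eq_iff] at hvv'
    rcases hvv' with ⟨h1, -⟩ | ⟨h1, -⟩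
    · exact h1
    · exact absurd (by rw [← h1, hci v hv]) (hcf v' hv')

/-- In an isolate-free bipartite graph, `OOIR(G) = 2·ν_I(G)`. -/
theorem stmt4 [Fintype V] (G : SimpleGraph V) (hG : ∀ v : V, ∃ w, G.Adj v w)
    (hbip : G.Colorable 2) :
    ooirNum G = 2 * inducedMatchingNum G := by
  classical
  obtain ⟨c⟩ := hbip
  apply le_antisymm
  · refine csSup_le (ooir_nonempty G) ?_
    rintro n ⟨S, hS, rfl⟩
    obtain ⟨M0, hM0, hM0c⟩ := upper_aux G c 0 S hS
    obtain ⟨M1, hM1, hM1c⟩ := upper_aux G c 1 S hS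
    have h0 : M0.card ≤ inducedMatchingNum G := le_csSup (im_bddAbove G) ⟨M0, hM0, rfl⟩
    have h1 : M1.card ≤ inducedMatchingNum G := le_csSup (im_bddAbove G) ⟨M1, hM1, rfl⟩
    have hiff : ∀ a : Fin 2, (a = 1) ↔ ¬ (a = 0) := by decide
    have hsplit : (S.filter (fun v => c v = 0)).card + (S.filter (fun v => c v = 1)).card
        = S.card := by
      have heq : S.filter (fun v => c v = 1) = S.filter (fun v => ¬ c v = 0) :=
        Finset.filter_congr (fun v _ => hiff (c v))
      rw [heq]
      exact Finset.card_filter_add_card_filter_not (p := fun v => c v = 0)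
    omega
  · have hmem : inducedMatchingNum G ∈
        {n | ∃ M : Finset (Sym2 V), isInducedMatching G ↑M ∧ M.card = n} :=
      Nat.sSup_mem (im_nonempty G) (im_bddAbove G)
    obtain ⟨M, hM, hMc⟩ := hmem
    obtain ⟨S, hSo, hSc⟩ := lower_aux G M hM
    have h2 : 2 * inducedMatchingNum G = S.card := by rw [hSc, hMc]
    rw [h2]
    exact le_csSup (ooir_bddAbove G) ⟨S, hSo, rfl⟩
end

section
/- Let k ≥ 2 and let G be the k-th power of the cycle C_{2k+3}. Then no minimal total dominating set of G contains two vertices that are adjacent on the original cycle. -/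
variable {V : Type*}

instance (k : ℕ) : NeZero (2 * k + 3) := ⟨by omega⟩

/-- The `k`-th power of the cycle `C_{2k+3}`, on vertex set `ZMod (2k+3)`:
`i` and `j` are adjacent iff they are distinct and at cyclic distance at most `k`. -/
def cyclePower (k : ℕ) : SimpleGraph (ZMod (2 * k + 3)) :=
  SimpleGraph.fromRel (fun i j => ∃ d : ℕ, d ≤ k ∧ j = i + (d : ZMod (2 * k + 3)))

lemma cast_helper (n x y : ℕ) (hn : 0 < n) (hx : x < 2*n) (hy : y < 2*n)
    (h : (x : ZMod n) = (y : ZMod n)) : x = y ∨ x = y + n ∨ y = x + n := by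
  haveI : NeZero n := ⟨hn.ne'⟩
  have h2 : x ≡ y [MOD n] := (ZMod.natCast_eq_natCast_iff x y n).mp h
  rcases le_total x y with hle | hle
  · obtain ⟨m, hm⟩ := (Nat.modEq_iff_dvd' hle).mp h2
    rcases m with _ | _ | m
    · left; omega
    · right; right; omega
    · exfalso
      have h4 : n * 2 ≤ n * (m + 1 + 1) := Nat.mul_le_mul_left n (by omega)
      omega
  · obtain ⟨m, hm⟩ := (Nat.modEq_iff_dvd' hle).mp h2.symm
    rcases m with _ | _ | m
    · left; omega
    · right; left; omega
    · exfalso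
      have h4 : n * 2 ≤ n * (m + 1 + 1) := Nat.mul_le_mul_left n (by omega)
      omega

lemma val_decomp (k : ℕ) (x y z : ZMod (2*k+3)) :
    (y - x).val = (y - z).val + (z - x).val ∨
    (y - x).val = (y - z).val + (z - x).val + (2*k+3) ∨
    (y - z).val + (z - x).val = (y - x).val + (2*k+3) := by
  have h : (((y - x).val : ℕ) : ZMod (2*k+3)) = (((y - z).val + (z - x).val : ℕ) : ZMod (2*k+3)) := by
    rw [Nat.cast_add, ZMod.natCast_rightInverse _, ZMod.natCast_rightInverse _,
      ZMod.natCast_rightInverse _]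
    ring
  have b1 := ZMod.val_lt (y - x)
  have b2 := ZMod.val_lt (y - z)
  have b3 := ZMod.val_lt (z - x)
  exact cast_helper (2*k+3) _ _ (by omega) (by omega) (by omega) h

lemma adj_iff' (k : ℕ) (x y : ZMod (2*k+3)) :
    (cyclePower k).Adj x y ↔
      ¬((y - x).val = 0 ∨ (y - x).val = k+1 ∨ (y - x).val = k+2) := by
  have hv := ZMod.val_lt (y - x)
  have hw := ZMod.val_lt (x - y)
  have hsum : (y - x).val + (x - y).val = 0 ∨ (y - x).val + (x - y).val = 2*k+3 := by
    have h0 : (((y - x).val + (x - y).val : ℕ) : ZMod (2*k+3)) = ((0:ℕ) : ZMod (2*k+3)) := by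
      rw [Nat.cast_add, ZMod.natCast_rightInverse _, ZMod.natCast_rightInverse _, Nat.cast_zero]
      ring
    have := cast_helper (2*k+3) _ 0 (by omega) (by omega) (by omega) h0
    omega
  have h1 : (∃ d : ℕ, d ≤ k ∧ y = x + (d : ZMod (2*k+3))) ↔ (y - x).val ≤ k := by
    constructor
    · rintro ⟨d, hd, rfl⟩
      rw [add_sub_cancel_left, ZMod.val_cast_of_lt (by omega)]
      exact hd
    · intro h
      exact ⟨(y - x).val, h, by rw [ZMod.natCast_rightInverse _]; ring⟩
  have h2 : (∃ d : ℕ, d ≤ k ∧ x = y + (d : ZMod (2*k+3))) ↔ (x - y).val ≤ k := by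
    constructor
    · rintro ⟨d, hd, rfl⟩
      rw [add_sub_cancel_left, ZMod.val_cast_of_lt (by omega)]
      exact hd
    · intro h
      exact ⟨(x - y).val, h, by rw [ZMod.natCast_rightInverse _]; ring⟩
  have h3 : (x = y) ↔ (y - x).val = 0 := by
    rw [ZMod.val_eq_zero, sub_eq_zero]; exact eq_comm
  rw [cyclePower, SimpleGraph.fromRel_adj, h1, h2, Ne, h3]
  clear h1 h2 h3
  omega


lemma priv_neighbor (G : SimpleGraph V) (S : Set V) (h : isMinTDSet G S) (v : V) (hv : v ∈ S) :
    ∃ w, G.Adj v w ∧ ∀ u ∈ S, u ≠ v → ¬ G.Adj u w := by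
  have hsub : S \ {v} ⊂ S := Set.sdiff_singleton_ssubset.mpr hv
  have hnot := h.2 _ hsub
  rw [isTDSet] at hnot
  push_neg at hnot
  obtain ⟨w, hw⟩ := hnot
  obtain ⟨u, hu, hadj⟩ := h.1 w
  have huv : u = v := by
    by_contra h'
    exact hw u ⟨hu, h'⟩ hadj
  subst huv
  refine ⟨w, hadj.symm, fun u' hu' hne hadj' => hw u' ⟨hu', hne⟩ hadj'.symm⟩

/-- No minimal TD-set of `C_{2k+3}^k` contains two consecutive vertices of the cycle. -/
theorem stmt5 (k : ℕ) (hk : 2 ≤ k) (S : Set (ZMod (2 * k + 3)))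
    (hS : isMinTDSet (cyclePower k) S) (i : ZMod (2 * k + 3)) :
    ¬ (i ∈ S ∧ i + 1 ∈ S) := by
  haveI : Fact (1 < 2*k+3) := ⟨by omega⟩
  rintro ⟨ha, hb⟩
  have hne : i + 1 ≠ i := by
    intro h
    have h1 : (1 : ZMod (2*k+3)) = 0 := by linear_combination h
    exact one_ne_zero h1
  obtain ⟨wa, hwaA, hwaP⟩ := priv_neighbor _ _ hS i ha
  obtain ⟨wb, hwbA, hwbP⟩ := priv_neighbor _ _ hS (i+1) hb
  have hp := (adj_iff' k i wa).mp hwaA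
  have he2 : ¬ (cyclePower k).Adj (i+1) wa := hwaP (i+1) hb hne
  rw [adj_iff', not_not] at he2
  have hq : ¬ (cyclePower k).Adj i wb := hwbP i ha (fun h => hne h.symm)
  rw [adj_iff', not_not] at hq
  have he3 := (adj_iff' k (i+1) wb).mp hwbA
  have d1 := val_decomp k i wa (i+1)
  have d2 := val_decomp k i wb (i+1)
  have hone : ((i+1) - i).val = 1 := by
    rw [add_sub_cancel_left]; exact ZMod.val_one _
  obtain ⟨u, huS, huA⟩ := hS.1 (i + ((k+2 : ℕ) : ZMod (2*k+3)))
  have hs := (adj_iff' k (i + ((k+2:ℕ) : ZMod (2*k+3))) u).mp huA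
  have hx2 : ((i + ((k+2:ℕ):ZMod (2*k+3))) - i).val = k+2 := by
    rw [add_sub_cancel_left]; exact ZMod.val_cast_of_lt (by omega)
  have d3 := val_decomp k i u (i + ((k+2:ℕ):ZMod (2*k+3)))
  have b1 := ZMod.val_lt (wa - i)
  have b2 := ZMod.val_lt (wa - (i+1))
  have b3 := ZMod.val_lt (wb - i)
  have b4 := ZMod.val_lt (wb - (i+1))
  have b5 := ZMod.val_lt (u - i)
  have b6 := ZMod.val_lt (u - (i + ((k+2:ℕ):ZMod (2*k+3))))
  by_cases hui : u = i
  · have ht : (u - i).val = 0 := by rw [hui, sub_self, ZMod.val_zero]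
    omega
  by_cases hub : u = i + 1
  · have ht : (u - i).val = 1 := by rw [hub]; exact hone
    omega
  · have hsa : ¬ (cyclePower k).Adj u wa := hwaP u huS hui
    rw [adj_iff', not_not] at hsa
    have hsb : ¬ (cyclePower k).Adj u wb := hwbP u huS hub
    rw [adj_iff', not_not] at hsb
    have d4 := val_decomp k i wa u
    have d5 := val_decomp k i wb u
    have b7 := ZMod.val_lt (wa - u)
    have b8 := ZMod.val_lt (wb - u)
    omega
end

section
/- Let T be a nontrivial tree with at least two support vertices in which every vertex is a leaf or a support vertex. Then the set of support vertices of T is the unique minimal total dominating set of T; in particular Γ_t(T) equals the number of support vertices of T. -/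
variable {V : Type*}

section Aux

lemma leaf_unique [Fintype V] (G : SimpleGraph V) [DecidableRel G.Adj] {u a b : V}
    (hu : G.degree u = 1) (ha : G.Adj u a) (hb : G.Adj u b) : a = b := by
  have hcard : (G.neighborFinset u).card = 1 := hu
  obtain ⟨x, hx⟩ := Finset.card_eq_one.mp hcard
  have ha' : a ∈ G.neighborFinset u := by simpa using ha
  have hb' : b ∈ G.neighborFinset u := by simpa using hb
  rw [hx, Finset.mem_singleton] at ha' hb'
  rw [ha', hb']

lemma walk_near [Fintype V] (G : SimpleGraph V) [DecidableRel G.Adj] {v : V}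
    (Hleaf : ∀ x, G.Adj v x → G.degree x = 1) :
    ∀ {a b : V}, G.Walk a b → (a = v ∨ G.Adj v a) → (b = v ∨ G.Adj v b) := by
  intro a b p
  induction p with
  | nil => exact id
  | @cons a y b h p ih =>
    intro hab
    apply ih
    rcases hab with rfl | haa
    · exact Or.inr h
    · exact Or.inl (leaf_unique G (Hleaf a haa) h haa.symm)

end Aux

/-- In a nontrivial tree with at least two support vertices in which every vertex is a
leaf or a support vertex, the set of support vertices is the unique minimal TD-set,
and `Γ_t(T)` equals the number of support vertices. -/
theorem stmt7 [Fintype V] (G : SimpleGraph V) [DecidableRel G.Adj]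
    (hT : G.IsTree) (hord : 2 ≤ Fintype.card V)
    (hall : ∀ v : V, G.degree v = 1 ∨ ∃ u, G.Adj v u ∧ G.degree u = 1)
    (h2supp : ∃ a b : V, a ≠ b ∧ (∃ u, G.Adj a u ∧ G.degree u = 1) ∧
      (∃ u, G.Adj b u ∧ G.degree u = 1)) :
    isMinTDSet G {v : V | ∃ u, G.Adj v u ∧ G.degree u = 1} ∧
    (∀ S : Set V, isMinTDSet G S → S = {v : V | ∃ u, G.Adj v u ∧ G.degree u = 1}) ∧
    upperTD G = Set.ncard {v : V | ∃ u, G.Adj v u ∧ G.degree u = 1} := by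
  set Supp : Set V := {v : V | ∃ u, G.Adj v u ∧ G.degree u = 1} with hSupp
  -- every TD set contains all support vertices
  have hsub : ∀ S : Set V, isTDSet G S → Supp ⊆ S := by
    rintro S hS a ⟨u, hau, hu⟩
    obtain ⟨w, hwS, hw⟩ := hS u
    have : w = a := leaf_unique G hu hw hau.symm
    exact this ▸ hwS
  -- Supp is a TD set
  have hTD : isTDSet G Supp := by
    intro v
    by_cases hv : G.degree v = 1
    · have hpos : 0 < G.degree v := by omega
      obtain ⟨w, hw⟩ := G.degree_pos_iff_exists_adj v |>.mp hpos
      exact ⟨w, ⟨v, hw.symm, hv⟩, hw⟩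
    · by_contra hcon
      push_neg at hcon
      have Hleaf : ∀ x, G.Adj v x → G.degree x = 1 := by
        intro x hx
        rcases hall x with h1 | hs
        · exact h1
        · exact absurd hx (by simpa using hcon x hs)
      obtain ⟨a, b, hab, ⟨ua, haua, hua⟩, ⟨ub, hbub, hub⟩⟩ := h2supp
      have key : ∀ c uc : V, G.Adj c uc → G.degree uc = 1 → c = v := by
        intro c uc hc huc
        have hre : c = v ∨ G.Adj v c :=
          walk_near G Hleaf (hT.isConnected.preconnected v c).some (Or.inl rfl)
        rcases hre with h | h
        · exact h
        · have hcl := Hleaf c h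
          have huv : uc = v := leaf_unique G hcl hc h.symm
          rw [huv] at huc
          exact absurd huc hv
      exact hab ((key a ua haua hua).trans (key b ub hbub hub).symm)
  have hmin : isMinTDSet G Supp :=
    ⟨hTD, fun T hT' hTDT => hT'.2 (hsub T hTDT)⟩
  have huniq : ∀ S : Set V, isMinTDSet G S → S = Supp := by
    intro S hS
    by_contra hne
    exact hS.2 Supp (HasSubset.Subset.ssubset_of_ne (hsub S hS.1) (fun h => hne h.symm)) hTD
  refine ⟨hmin, huniq, ?_⟩
  have hset : {n | ∃ S : Finset V, isMinTDSet G ↑S ∧ S.card = n} = {Supp.ncard} := by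
    ext n
    constructor
    · rintro ⟨S, hS, rfl⟩
      have h1 : (S : Set V) = Supp := huniq _ hS
      simp only [Set.mem_singleton_iff, ← h1, Set.ncard_coe_finset]
    · rintro rfl
      have hF : Supp.Finite := Set.toFinite _
      refine ⟨hF.toFinset, by simpa [hF.coe_toFinset] using hmin, ?_⟩
      exact (Set.ncard_eq_toFinset_card Supp hF).symm
  show upperTD G = Supp.ncard
  rw [upperTD, hset, csSup_singleton]
end

section
/- For k ≥ 5, let F_k be the graph obtained from two disjoint copies of K_k with vertex sets {u_1,...,u_k} and {v_1,...,v_k} by adding the edges u_i v_i for i = 1,...,k−1. Then the open-open irredundance number of F_k equals k − 1. -/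
variable {V : Type*}

/-- The graph `F_k`: two disjoint copies of `K_k` (the `inl` copy on `u_1,…,u_k` and the
`inr` copy on `v_1,…,v_k`) together with the edges `u_i v_i` for `1 ≤ i ≤ k-1`. -/
def Fgraph (k : ℕ) : SimpleGraph (Fin k ⊕ Fin k) :=
  SimpleGraph.fromRel (fun a b =>
    match a, b with
    | Sum.inl _, Sum.inl _ => True
    | Sum.inr _, Sum.inr _ => True
    | Sum.inl i, Sum.inr j => i = j ∧ (i : ℕ) + 1 < k
    | Sum.inr _, Sum.inl _ => False)

lemma Fadj_ll {k : ℕ} (i j : Fin k) : (Fgraph k).Adj (.inl i) (.inl j) ↔ i ≠ j := by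
  simp [Fgraph, SimpleGraph.fromRel_adj]

lemma Fadj_rr {k : ℕ} (i j : Fin k) : (Fgraph k).Adj (.inr i) (.inr j) ↔ i ≠ j := by
  simp [Fgraph, SimpleGraph.fromRel_adj]

lemma Fadj_lr {k : ℕ} (i j : Fin k) : (Fgraph k).Adj (.inl i) (.inr j) ↔ i = j ∧ (i : ℕ) + 1 < k := by
  simp [Fgraph, SimpleGraph.fromRel_adj]

lemma Fadj_rl {k : ℕ} (i j : Fin k) : (Fgraph k).Adj (.inr i) (.inl j) ↔ j = i ∧ (j : ℕ) + 1 < k := by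
  simp [Fgraph, SimpleGraph.fromRel_adj]

lemma F_lower (k : ℕ) (hk : 5 ≤ k) :
    ∃ S : Finset (Fin k ⊕ Fin k), isOOIrr (Fgraph k) ↑S ∧ S.card = k - 1 := by
  have hk0 : 0 < k := by omega
  set last : Fin k := ⟨k - 1, by omega⟩ with hlast
  refine ⟨(Finset.univ.erase last).map ⟨Sum.inl, Sum.inl_injective⟩, ?_, ?_⟩
  · intro v hv
    simp only [Finset.coe_map, Set.mem_image, Finset.coe_erase, Set.mem_diff, Function.Embedding.coeFn_mk] at hv
    obtain ⟨i, ⟨-, hi⟩, rfl⟩ := hv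
    have hilt : (i : ℕ) + 1 < k := by
      have := i.isLt
      rcases Nat.lt_or_ge ((i : ℕ) + 1) k with h | h
      · exact h
      · exfalso; apply hi; simp only [Set.mem_singleton_iff]
        apply Fin.ext; simp [hlast]; omega
    refine ⟨Sum.inr i, by rw [Fadj_lr]; exact ⟨rfl, hilt⟩, ?_⟩
    intro u hu hne
    simp only [Finset.coe_map, Set.mem_image, Function.Embedding.coeFn_mk] at hu
    obtain ⟨j, -, rfl⟩ := hu
    rw [Fadj_lr]
    rintro ⟨rfl, -⟩
    exact hne rfl
  · rw [Finset.card_map, Finset.card_erase_of_mem (Finset.mem_univ _), Finset.card_univ,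
      Fintype.card_fin]

lemma F_upper (k : ℕ) (hk : 5 ≤ k) (S : Finset (Fin k ⊕ Fin k))
    (hS : isOOIrr (Fgraph k) ↑S) : S.card ≤ k - 1 := by
  classical
  set A : Finset (Fin k) := Finset.univ.filter (fun i => Sum.inl i ∈ S) with hA
  set B : Finset (Fin k) := Finset.univ.filter (fun i => Sum.inr i ∈ S) with hB
  have hmemA : ∀ i, i ∈ A ↔ Sum.inl i ∈ S := by intro i; simp [hA]
  have hmemB : ∀ i, i ∈ B ↔ Sum.inr i ∈ S := by intro i; simp [hB]
  have hcard : S.card = A.card + B.card := by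
    have hSeq : S = A.map ⟨Sum.inl, Sum.inl_injective⟩ ∪ B.map ⟨Sum.inr, Sum.inr_injective⟩ := by
      ext x
      cases x <;> simp [hmemA, hmemB]
    rw [hSeq, Finset.card_union_of_disjoint, Finset.card_map, Finset.card_map]
    rw [Finset.disjoint_left]
    rintro x hx hy
    simp only [Finset.mem_map, Function.Embedding.coeFn_mk] at hx hy
    obtain ⟨a, -, rfl⟩ := hx
    obtain ⟨b, -, h⟩ := hy
    cases h
  set last : Fin k := ⟨k - 1, by omega⟩ with hlast
  -- claim C1
  have C1 : ∀ i, Sum.inl i ∈ S →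
      (∃ l, ∀ j, Sum.inl j ∈ S → j = i ∨ j = l) ∨
      ((i : ℕ) + 1 < k ∧ ∀ j, Sum.inr j ∈ S → j = i) := by
    intro i hi
    obtain ⟨w, hadj, hpriv⟩ := hS (Sum.inl i) hi
    cases w with
    | inl l =>
      left
      refine ⟨l, fun j hj => ?_⟩
      by_contra h
      push_neg at h
      exact hpriv (Sum.inl j) hj (by simp [h.1]) ((Fadj_ll j l).mpr h.2)
    | inr j =>
      obtain ⟨rfl, hlt⟩ := (Fadj_lr i j).mp hadj
      right
      refine ⟨hlt, fun m hm => ?_⟩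
      by_contra hne
      exact hpriv (Sum.inr m) hm (by simp) ((Fadj_rr m i).mpr hne)
  have C2 : ∀ i, Sum.inr i ∈ S →
      (∃ l, ∀ j, Sum.inr j ∈ S → j = i ∨ j = l) ∨
      ((i : ℕ) + 1 < k ∧ ∀ j, Sum.inl j ∈ S → j = i) := by
    intro i hi
    obtain ⟨w, hadj, hpriv⟩ := hS (Sum.inr i) hi
    cases w with
    | inr l =>
      left
      refine ⟨l, fun j hj => ?_⟩
      by_contra h
      push_neg at h
      exact hpriv (Sum.inr j) hj (by simp [h.1]) ((Fadj_rr j l).mpr h.2)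
    | inl j =>
      obtain ⟨rfl, hlt⟩ := (Fadj_rl i j).mp hadj
      right
      refine ⟨hlt, fun m hm => ?_⟩
      by_contra hne
      exact hpriv (Sum.inl m) hm (by simp) ((Fadj_ll m _).mpr hne)
  have hlastval : (last : ℕ) = k - 1 := rfl
  have herase : (Finset.univ.erase last).card = k - 1 := by
    rw [Finset.card_erase_of_mem (Finset.mem_univ _), Finset.card_univ, Fintype.card_fin]
  by_cases ha : 3 ≤ A.card
  · have key : ∀ i, Sum.inl i ∈ S → ((i : ℕ) + 1 < k ∧ ∀ j, Sum.inr j ∈ S → j = i) := by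
      intro i hi
      rcases C1 i hi with ⟨l, hl⟩ | h
      · exfalso
        have hsub : A ⊆ {i, l} := fun j hj => by
          rcases hl j ((hmemA j).mp hj) with rfl | rfl <;> simp
        have h1 := Finset.card_le_card hsub
        have h2 : ({i, l} : Finset (Fin k)).card ≤ 2 :=
          (Finset.card_insert_le _ _).trans (by simp)
        omega
      · exact h
    obtain ⟨a, haA, b, hbA, hab⟩ := Finset.one_lt_card.mp (by omega : 1 < A.card)
    have hBe : B.card = 0 := by
      rw [Finset.card_eq_zero, Finset.eq_empty_iff_forall_notMem]
      intro m hm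
      have h1 := (key a ((hmemA a).mp haA)).2 m ((hmemB m).mp hm)
      have h2 := (key b ((hmemA b).mp hbA)).2 m ((hmemB m).mp hm)
      exact hab (h1 ▸ h2)
    have hAsub : A ⊆ Finset.univ.erase last := by
      intro i hi
      refine Finset.mem_erase.mpr ⟨?_, Finset.mem_univ _⟩
      have hlt := (key i ((hmemA i).mp hi)).1
      intro h
      rw [h, hlastval] at hlt
      omega
    have := Finset.card_le_card hAsub
    omega
  · by_cases hb : 3 ≤ B.card
    · have key : ∀ i, Sum.inr i ∈ S → ((i : ℕ) + 1 < k ∧ ∀ j, Sum.inl j ∈ S → j = i) := by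
        intro i hi
        rcases C2 i hi with ⟨l, hl⟩ | h
        · exfalso
          have hsub : B ⊆ {i, l} := fun j hj => by
            rcases hl j ((hmemB j).mp hj) with rfl | rfl <;> simp
          have h1 := Finset.card_le_card hsub
          have h2 : ({i, l} : Finset (Fin k)).card ≤ 2 :=
            (Finset.card_insert_le _ _).trans (by simp)
          omega
        · exact h
      obtain ⟨a, haB, b, hbB, hab⟩ := Finset.one_lt_card.mp (by omega : 1 < B.card)
      have hAe : A.card = 0 := by
        rw [Finset.card_eq_zero, Finset.eq_empty_iff_forall_notMem]
        intro m hm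
        have h1 := (key a ((hmemB a).mp haB)).2 m ((hmemA m).mp hm)
        have h2 := (key b ((hmemB b).mp hbB)).2 m ((hmemA m).mp hm)
        exact hab (h1 ▸ h2)
      have hBsub : B ⊆ Finset.univ.erase last := by
        intro i hi
        refine Finset.mem_erase.mpr ⟨?_, Finset.mem_univ _⟩
        have hlt := (key i ((hmemB i).mp hi)).1
        intro h
        rw [h, hlastval] at hlt
        omega
      have := Finset.card_le_card hBsub
      omega
    · omega


/-- For `k ≥ 5`, `OOIR(F_k) = k - 1`. -/
theorem stmt8 (k : ℕ) (hk : 5 ≤ k) : ooirNum (Fgraph k) = k - 1 := by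
  unfold ooirNum
  obtain ⟨S0, hS0, hc0⟩ := F_lower k hk
  apply le_antisymm
  · refine csSup_le ⟨k - 1, S0, hS0, hc0⟩ ?_
    rintro n ⟨S, hS, rfl⟩
    exact F_upper k hk S hS
  · refine le_csSup ⟨k - 1, ?_⟩ ⟨S0, hS0, hc0⟩
    rintro n ⟨S, hS, rfl⟩
    exact F_upper k hk S hS
end

section
/- For k ≥ 1, let G_k be built from k disjoint copies H_1,...,H_k of the join P_4 ⊕ P_4 (with paths Q_{i,1}: u_{i,1}v_{i,1}w_{i,1}x_{i,1} and Q_{i,2}: u_{i,2}v_{i,2}w_{i,2}x_{i,2} in H_i), with edges w_{i,2}w_{i+1,1} added cyclically for k ≥ 2. Then every minimal total dominating set of G_k contains at most two vertices from each copy H_i; consequently Γ_t(G_k) = 2k. -/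
variable {V : Type*}

/-- The graph `G_k`: `k` disjoint copies of `P_4 ⊕ P_4` joined cyclically. The vertex
`(i, s, p)` is vertex number `p` of the path `Q_{i+1,s+1}`; within a copy the two paths
are completely joined, and `w_{i,2} = (i,1,2)` is joined to `w_{i+1,1} = (i+1,0,2)`
cyclically. -/
def Gk (k : ℕ) : SimpleGraph (Fin k × Fin 2 × Fin 4) :=
  SimpleGraph.fromRel (fun a b =>
    (a.1 = b.1 ∧ a.2.1 ≠ b.2.1) ∨
    (a.1 = b.1 ∧ a.2.1 = b.2.1 ∧ (a.2.2 : ℕ) + 1 = (b.2.2 : ℕ)) ∨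
    (a.2.1 = 1 ∧ a.2.2 = 2 ∧ b.2.1 = 0 ∧ b.2.2 = 2 ∧ (b.1 : ℕ) = ((a.1 : ℕ) + 1) % k))

section Aux

def adj8 (a b : Fin 2 × Fin 4) : Prop :=
  a ≠ b ∧ (a.1 ≠ b.1 ∨ (a.1 = b.1 ∧ ((a.2 : ℕ) + 1 = (b.2 : ℕ) ∨ (b.2 : ℕ) + 1 = (a.2 : ℕ))))

instance (a b : Fin 2 × Fin 4) : Decidable (adj8 a b) := by unfold adj8; infer_instance

def cov (T : Finset (Fin 2 × Fin 4)) (v : Fin 2 × Fin 4) : Prop :=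
  v ∈ T ∧ v.2 ≠ 2 ∧ ∀ w, adj8 v w → ∃ u ∈ T, u ≠ v ∧ adj8 u w

instance (T) (v) : Decidable (cov T v) := by unfold cov; infer_instance

set_option maxHeartbeats 4000000 in
set_option maxRecDepth 10000 in
lemma key : ∀ T : Finset (Fin 2 × Fin 4), 3 ≤ T.card → ∃ v, cov T v := by decide

lemma adj_same {k : ℕ} {a b : Fin k × Fin 2 × Fin 4} (h : a.1 = b.1) :
    (Gk k).Adj a b ↔ adj8 a.2 b.2 := by
  rw [Gk, SimpleGraph.fromRel_adj, adj8]
  constructor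
  · rintro ⟨hne, hrel⟩
    refine ⟨fun h2 => hne (Prod.ext h h2), ?_⟩
    rcases hrel with (⟨_, hp⟩ | ⟨_, hp, hc⟩ | ⟨hp1, _, hp2, _, _⟩) |
        (⟨_, hp⟩ | ⟨_, hp, hc⟩ | ⟨hp1, _, hp2, _, _⟩)
    · exact Or.inl hp
    · exact Or.inr ⟨hp, Or.inl hc⟩
    · exact Or.inl (by rw [hp1, hp2]; decide)
    · exact Or.inl (Ne.symm hp)
    · exact Or.inr ⟨hp.symm, Or.inr hc⟩
    · exact Or.inl (by rw [hp1, hp2]; decide)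
  · rintro ⟨hne, hrel⟩
    refine ⟨fun h2 => hne (by rw [h2]), ?_⟩
    rcases hrel with hp | ⟨hp, hc | hc⟩
    · exact Or.inl (Or.inl ⟨h, hp⟩)
    · exact Or.inl (Or.inr (Or.inl ⟨h, hp, hc⟩))
    · exact Or.inr (Or.inr (Or.inl ⟨h.symm, hp.symm, hc⟩))

lemma adj_cross {k : ℕ} {a b : Fin k × Fin 2 × Fin 4} (hadj : (Gk k).Adj a b)
    (h : a.1 ≠ b.1) : a.2.2 = 2 ∧ b.2.2 = 2 := by
  rw [Gk, SimpleGraph.fromRel_adj] at hadj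
  obtain ⟨-, hrel⟩ := hadj
  rcases hrel with (⟨h1, _⟩ | ⟨h1, _, _⟩ | ⟨_, h1, _, h2, _⟩) |
      (⟨h1, _⟩ | ⟨h1, _, _⟩ | ⟨_, h1, _, h2, _⟩)
  · exact absurd h1 h
  · exact absurd h1 h
  · exact ⟨h1, h2⟩
  · exact absurd h1.symm h
  · exact absurd h1.symm h
  · exact ⟨h2, h1⟩

lemma part1_s10 {k : ℕ} (S : Finset (Fin k × Fin 2 × Fin 4)) (hS : isMinTDSet (Gk k) ↑S)
    (i : Fin k) : (S.filter (fun a => a.1 = i)).card ≤ 2 := by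
  by_contra hcard
  push_neg at hcard
  set Si := S.filter (fun a => a.1 = i) with hSi
  have hinj : Set.InjOn (fun a : Fin k × Fin 2 × Fin 4 => a.2) ↑Si := by
    intro a ha b hb hab
    have hai : a.1 = i := (Finset.mem_filter.1 ha).2
    have hbi : b.1 = i := (Finset.mem_filter.1 hb).2
    exact Prod.ext (hai.trans hbi.symm) hab
  set T := Si.image (fun a => a.2) with hT
  have hTcard : 3 ≤ T.card := by
    rw [hT, Finset.card_image_of_injOn hinj]; omega
  obtain ⟨v2, hv2T, hv2ne, hv2cov⟩ := key T hTcard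
  obtain ⟨a, haSi, ha2⟩ := Finset.mem_image.1 hv2T
  have hai : a.1 = i := (Finset.mem_filter.1 haSi).2
  set v : Fin k × Fin 2 × Fin 4 := (i, v2) with hv
  have hva : a = v := Prod.ext hai ha2
  have hvS : v ∈ S := hva ▸ (Finset.mem_filter.1 haSi).1
  have hsub : (↑S \ {v} : Set (Fin k × Fin 2 × Fin 4)) ⊂ ↑S :=
    Set.sdiff_singleton_ssubset.2 hvS
  apply hS.2 _ hsub
  intro x
  obtain ⟨u, huS, hadj⟩ := hS.1 x
  by_cases huv : u = v
  · subst huv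
    have hadj' : (Gk k).Adj v x := hadj.symm
    have hxi : v.1 = x.1 := by
      by_contra hxi
      exact hv2ne (adj_cross hadj' hxi).1
    have h8 : adj8 v2 x.2 := (adj_same hxi).1 hadj'
    obtain ⟨u2, hu2T, hu2ne, hu2adj⟩ := hv2cov x.2 h8
    obtain ⟨b, hbSi, hb2⟩ := Finset.mem_image.1 hu2T
    have hbi : b.1 = i := (Finset.mem_filter.1 hbSi).2
    have hbv : b ≠ v := fun hh => hu2ne (by rw [← hb2, hh])
    have hbx : (Gk k).Adj b x := by
      rw [adj_same (show b.1 = x.1 by rw [hbi]; exact hxi)]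
      rw [hb2]; exact hu2adj
    exact ⟨b, ⟨(Finset.mem_filter.1 hbSi).1, hbv⟩, hbx.symm⟩
  · exact ⟨u, ⟨huS, huv⟩, hadj⟩

def fEx (k : ℕ) (x : Fin k × Fin 2) : Fin k × Fin 2 × Fin 4 :=
  (x.1, 0, if x.2 = 0 then 1 else 2)

def S0 (k : ℕ) : Finset (Fin k × Fin 2 × Fin 4) := Finset.univ.image (fEx k)

lemma mem_S0 {k : ℕ} {a : Fin k × Fin 2 × Fin 4} :
    a ∈ S0 k ↔ (a.2 = ((0 : Fin 2), (1 : Fin 4)) ∨ a.2 = (0, 2)) := by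
  constructor
  · rintro h
    obtain ⟨x, -, rfl⟩ := Finset.mem_image.1 h
    rcases x with ⟨i, b⟩
    fin_cases b <;> simp [fEx]
  · intro h
    apply Finset.mem_image.2
    rcases h with h | h
    · exact ⟨(a.1, 0), Finset.mem_univ _, by simp [fEx, ← h]⟩
    · exact ⟨(a.1, 1), Finset.mem_univ _, by simp [fEx, ← h]⟩

lemma S0_card {k : ℕ} : (S0 k).card = 2 * k := by
  rw [S0, Finset.card_image_of_injective _ ?_, Finset.card_univ]
  · simp [mul_comm]
  · intro x y h
    rcases x with ⟨i, b⟩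
    rcases y with ⟨j, c⟩
    simp only [fEx, Prod.ext_iff] at h ⊢
    refine ⟨h.1, ?_⟩
    fin_cases b <;> fin_cases c <;> simp_all

lemma S0_TDS {k : ℕ} : isTDSet (Gk k) ↑(S0 k) := by
  intro v
  have hnb : ∀ x : Fin 2 × Fin 4,
      ∃ y : Fin 2 × Fin 4, (y = (0, 1) ∨ y = (0, 2)) ∧ adj8 x y := by decide
  obtain ⟨y, hy, hadj⟩ := hnb v.2
  exact ⟨(v.1, y), mem_S0.2 hy, (adj_same (a := v) (b := (v.1, y)) rfl).2 hadj⟩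

lemma S0_min {k : ℕ} : isMinTDSet (Gk k) ↑(S0 k) := by
  refine ⟨S0_TDS, ?_⟩
  intro T hT hTDS
  have hsub := hT.1
  obtain ⟨v, hvS0, hvT⟩ := Set.exists_of_ssubset hT
  have hv2 := mem_S0.1 hvS0
  set x : Fin k × Fin 2 × Fin 4 := (v.1, 0, if v.2.2 = 1 then 0 else 3) with hx
  obtain ⟨u, huT, hadj⟩ := hTDS x
  have huS0 := mem_S0.1 (hsub huT)
  by_cases h1 : x.1 = u.1
  · have h8 : adj8 x.2 u.2 := (adj_same h1).1 hadj
    have hkey : ∀ c d : Fin 2 × Fin 4, (c = (0, 1) ∨ c = (0, 2)) → (d = (0, 1) ∨ d = (0, 2)) →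
        adj8 ((0 : Fin 2), if c.2 = 1 then (0 : Fin 4) else 3) d → d = c := by decide
    have : u.2 = v.2 := hkey v.2 u.2 hv2 huS0 h8
    have : u = v := Prod.ext h1.symm this
    exact hvT (this ▸ huT)
  · have := (adj_cross hadj h1).1
    have hne : ∀ c : Fin 2 × Fin 4, (c = (0, 1) ∨ c = (0, 2)) →
        (if c.2 = 1 then (0 : Fin 4) else 3) ≠ 2 := by decide
    exact hne v.2 hv2 this

end Aux

/-- Every minimal TD-set of `G_k` has at most two vertices in each copy `H_i`;
consequently `Γ_t(G_k) = 2k`. -/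
theorem stmt10 (k : ℕ) (hk : 1 ≤ k) :
    (∀ S : Finset (Fin k × Fin 2 × Fin 4), isMinTDSet (Gk k) ↑S →
      ∀ i : Fin k, (S.filter (fun a => a.1 = i)).card ≤ 2) ∧
    upperTD (Gk k) = 2 * k := by
  refine ⟨fun S hS i => part1_s10 S hS i, ?_⟩
  have hub : ∀ n ∈ {n | ∃ S : Finset (Fin k × Fin 2 × Fin 4),
      isMinTDSet (Gk k) ↑S ∧ S.card = n}, n ≤ 2 * k := by
    rintro n ⟨S, hS, rfl⟩
    calc S.card = ∑ i : Fin k, (S.filter fun a => a.1 = i).card :=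
          Finset.card_eq_sum_card_fiberwise (fun x _ => Finset.mem_univ _)
      _ ≤ ∑ _i : Fin k, 2 := Finset.sum_le_sum (fun i _ => part1_s10 S hS i)
      _ = 2 * k := by simp [Finset.sum_const, mul_comm]
  have hmem : 2 * k ∈ {n | ∃ S : Finset (Fin k × Fin 2 × Fin 4),
      isMinTDSet (Gk k) ↑S ∧ S.card = n} := ⟨S0 k, S0_min, S0_card⟩
  rw [upperTD]
  exact le_antisymm (csSup_le ⟨_, hmem⟩ hub) (le_csSup ⟨2 * k, hub⟩ hmem)
end

section
/- For k ≥ 1, the graph G_k built from k disjoint copies of P_4 ⊕ P_4 joined cyclically by edges w_{i,2}w_{i+1,1} satisfies OOIR(G_k) = 2k: every open-open irredundant set contains at most two vertices from each copy of P_4 ⊕ P_4, and this bound is achieved. -/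
variable {V : Type*}

def hrel (a b : Fin 2 × Fin 4) : Prop :=
  (a.1 ≠ b.1) ∨ (a.1 = b.1 ∧ (a.2 : ℕ) + 1 = (b.2 : ℕ))

instance : ∀ a b, Decidable (hrel a b) := fun a b => by unfold hrel; infer_instance

def hadj (a b : Fin 2 × Fin 4) : Prop := a ≠ b ∧ (hrel a b ∨ hrel b a)

instance : ∀ a b, Decidable (hadj a b) := fun a b => by unfold hadj; infer_instance

lemma core : ∀ a b c : Fin 2 × Fin 4, a ≠ b → a ≠ c → b ≠ c →
    ¬ (∀ v : Fin 2 × Fin 4, (v = a ∨ v = b ∨ v = c) → v.2 ≠ 2 →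
       ∃ w, hadj v w ∧ ∀ u, (u = a ∨ u = b ∨ u = c) → u ≠ v → ¬ hadj u w) := by
  decide

lemma gkAdj_iff {k : ℕ} (i : Fin k) (a b : Fin 2 × Fin 4) :
    (Gk k).Adj (i, a) (i, b) ↔ hadj a b := by
  rw [Gk, SimpleGraph.fromRel_adj, hadj]
  constructor
  · rintro ⟨hne, h⟩
    refine ⟨fun e => hne (by rw [e]), ?_⟩
    rcases h with (⟨-, h⟩ | ⟨-, h1, h2⟩ | ⟨h1, -, h2, -⟩) | (⟨-, h⟩ | ⟨-, h1, h2⟩ | ⟨h1, -, h2, -⟩)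
    · exact Or.inl (Or.inl h)
    · exact Or.inl (Or.inr ⟨h1, h2⟩)
    · exact Or.inl (Or.inl (by rw [(h1 : a.1 = 1), (h2 : b.1 = 0)]; decide))
    · exact Or.inr (Or.inl h)
    · exact Or.inr (Or.inr ⟨h1, h2⟩)
    · exact Or.inr (Or.inl (by rw [(h1 : b.1 = 1), (h2 : a.1 = 0)]; decide))
  · rintro ⟨hne, h⟩
    refine ⟨by simp [Prod.ext_iff, hne], ?_⟩
    rcases h with (h | ⟨h1, h2⟩) | (h | ⟨h1, h2⟩)
    · exact Or.inl (Or.inl ⟨rfl, h⟩)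
    · exact Or.inl (Or.inr (Or.inl ⟨rfl, h1, h2⟩))
    · exact Or.inr (Or.inl ⟨rfl, h⟩)
    · exact Or.inr (Or.inr (Or.inl ⟨rfl, h1, h2⟩))

lemma adj_fst {k : ℕ} (i : Fin k) (a : Fin 2 × Fin 4) (ha : a.2 ≠ 2)
    (w : Fin k × Fin 2 × Fin 4) (h : (Gk k).Adj (i, a) w) : w.1 = i := by
  rcases h with ⟨-, h⟩
  rcases h with (⟨h1, -⟩ | ⟨h1, -⟩ | ⟨-, h2, -⟩) | (⟨h1, -⟩ | ⟨h1, -⟩ | ⟨-, -, -, h2, -⟩)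
  · exact h1.symm
  · exact h1.symm
  · exact absurd h2 ha
  · exact h1
  · exact h1
  · exact absurd h2 ha

/-- Every open-open irredundant set of `G_k` has at most two vertices in each copy
`H_i`, and `OOIR(G_k) = 2k`. -/
theorem stmt11 (k : ℕ) (hk : 1 ≤ k) :
    (∀ S : Finset (Fin k × Fin 2 × Fin 4), isOOIrr (Gk k) ↑S →
      ∀ i : Fin k, (S.filter (fun a => a.1 = i)).card ≤ 2) ∧
    ooirNum (Gk k) = 2 * k := by
  have h1 : ∀ S : Finset (Fin k × Fin 2 × Fin 4), isOOIrr (Gk k) ↑S →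
      ∀ i : Fin k, (S.filter (fun a => a.1 = i)).card ≤ 2 := by
    intro S hS i
    by_contra hc
    push_neg at hc
    obtain ⟨x, y, z, hx, hy, hz, hxy, hxz, hyz⟩ := Finset.two_lt_card_iff.mp hc
    simp only [Finset.mem_filter] at hx hy hz
    have hmem : ∀ v : Fin 2 × Fin 4, (v = x.2 ∨ v = y.2 ∨ v = z.2) → (i, v) ∈ S := by
      rintro v (rfl | rfl | rfl)
      · rw [← hx.2]; exact hx.1
      · rw [← hy.2]; exact hy.1
      · rw [← hz.2]; exact hz.1
    refine core x.2 y.2 z.2 ?_ ?_ ?_ ?_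
    · intro e; exact hxy (Prod.ext (hx.2.trans hy.2.symm) e)
    · intro e; exact hxz (Prod.ext (hx.2.trans hz.2.symm) e)
    · intro e; exact hyz (Prod.ext (hy.2.trans hz.2.symm) e)
    intro v hv hv2
    obtain ⟨w, hadjw, hpriv⟩ := hS (i, v) (by exact_mod_cast hmem v hv)
    have hw1 : w.1 = i := adj_fst i v hv2 w hadjw
    have hw : w = (i, w.2) := by rw [← hw1]
    refine ⟨w.2, ?_, ?_⟩
    · exact (gkAdj_iff i v w.2).mp (hw ▸ hadjw)
    · intro u hu huv hadj'
      have hne : ¬ (Gk k).Adj (i, u) w := by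
        refine hpriv (i, u) (by exact_mod_cast hmem u hu) ?_
        intro e
        exact huv (congrArg Prod.snd e)
      exact hne (hw ▸ (gkAdj_iff i u w.2).mpr hadj')
  refine ⟨h1, ?_⟩
  set S₀ : Finset (Fin k × Fin 2 × Fin 4) :=
    Finset.image (fun p : Fin k × Fin 2 => (p.1, p.2, (0 : Fin 4))) Finset.univ with hS₀
  have hmemS₀ : ∀ v, v ∈ S₀ ↔ v.2.2 = 0 := by
    intro v
    simp only [hS₀, Finset.mem_image, Finset.mem_univ, true_and]
    constructor
    · rintro ⟨p, rfl⟩; rfl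
    · intro h; exact ⟨(v.1, v.2.1), by rw [← h]⟩
  have hcard : S₀.card = 2 * k := by
    rw [hS₀, Finset.card_image_of_injective _ (by intro p q h; simpa [Prod.ext_iff] using h)]
    simp [mul_comm]
  have hOO : isOOIrr (Gk k) ↑S₀ := by
    intro v hv
    rw [Finset.mem_coe, hmemS₀] at hv
    refine ⟨(v.1, v.2.1 + 1, 0), ?_, ?_⟩
    · have hv' : v = (v.1, v.2.1, v.2.2) := rfl
      rw [hv', hv]
      refine (gkAdj_iff v.1 (v.2.1, 0) (v.2.1 + 1, 0)).mpr ?_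
      have hne : v.2.1 ≠ v.2.1 + 1 := by
        generalize v.2.1 = s; revert s; decide
      exact ⟨by simp [Prod.ext_iff, hne], Or.inl (Or.inl hne)⟩
    · intro u hu hune habs
      rw [Finset.mem_coe, hmemS₀] at hu
      rcases habs with ⟨hne, h⟩
      have h2 : u.1 = v.1 ∧ u.2.1 ≠ v.2.1 + 1 := by
        rcases h with (⟨g1, g3⟩ | ⟨g1, -, g3⟩ | ⟨-, g3, -⟩) |
          (⟨g1, g3⟩ | ⟨g1, -, g3⟩ | ⟨-, -, -, g3, -⟩)
        · exact ⟨g1, g3⟩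
        · rw [hu] at g3; simp at g3
        · exact absurd (g3 : u.2.2 = 2) (by rw [hu]; decide)
        · exact ⟨g1.symm, fun e => g3 e.symm⟩
        · rw [hu] at g3; simp at g3
        · exact absurd (g3 : u.2.2 = 2) (by rw [hu]; decide)
      have h3 : u.2.1 = v.2.1 := by
        have h4 := h2.2
        revert h4
        generalize u.2.1 = s; generalize v.2.1 = t
        revert s t; decide
      apply hune
      have hu' : u = (u.1, u.2.1, u.2.2) := rfl
      have hv' : v = (v.1, v.2.1, v.2.2) := rfl
      rw [hu', hv', h2.1, h3, hu, hv]
  have hA : (2 * k) ∈ {n | ∃ S : Finset (Fin k × Fin 2 × Fin 4), isOOIrr (Gk k) ↑S ∧ S.card = n} :=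
    ⟨S₀, hOO, hcard⟩
  have hbdd : ∀ n ∈ {n | ∃ S : Finset (Fin k × Fin 2 × Fin 4), isOOIrr (Gk k) ↑S ∧ S.card = n},
      n ≤ 2 * k := by
    rintro n ⟨S, hSo, rfl⟩
    have hsum := Finset.card_eq_sum_card_fiberwise
      (f := fun a : Fin k × Fin 2 × Fin 4 => a.1) (s := S) (t := Finset.univ)
      (fun x _ => Finset.mem_univ _)
    rw [hsum]
    calc ∑ i : Fin k, (S.filter (fun a => a.1 = i)).card ≤ ∑ _i : Fin k, 2 :=
          Finset.sum_le_sum (fun i _ => h1 S hSo i)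
      _ = 2 * k := by simp [mul_comm]
  rw [ooirNum]
  exact le_antisymm (csSup_le ⟨2 * k, hA⟩ hbdd) (le_csSup ⟨2 * k, hbdd⟩ hA)
end

section
/- If T is a tree of order n, then T has a total dominating sequence of length n (equivalently, the Grundy total domination number of T equals n) if and only if T has a perfect matching. -/
variable {V : Type*}

open SimpleGraph Walk in
lemma exists_leaf [Fintype V] [Nonempty V] (G : SimpleGraph V) (hac : G.IsAcyclic)
    (hdeg : ∀ v : V, ∃ w, G.Adj v w) : ∃ u v, G.Adj u v ∧ ∀ w, G.Adj u w → w = v := by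
  classical
  set N := Fintype.card V with hN
  set P : ℕ → Prop := fun k => ∃ (x y : V) (p : G.Walk x y), p.IsPath ∧ p.length = k with hP
  have hP1 : P 1 := by
    obtain ⟨w, hw⟩ := hdeg (Classical.arbitrary V)
    refine ⟨_, _, Walk.cons hw Walk.nil, ?_, by simp⟩
    rw [Walk.cons_isPath_iff _ _]
    simp [hw.ne]
  have hbound : ∀ m, P m → m < N := by
    rintro m ⟨x, y, p, hp, rfl⟩
    exact hp.length_lt
  set k := Nat.findGreatest P N with hk
  have hk1 : 1 ≤ k := Nat.le_findGreatest (hbound 1 hP1).le hP1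
  obtain ⟨a, b, p, hp, hplen⟩ : P k := Nat.findGreatest_spec (hbound 1 hP1).le hP1
  -- r := p.reverse is a path from b
  have hrp : p.reverse.IsPath := hp.reverse
  have hnotnil : ¬ p.reverse.Nil := by
    rw [Walk.nil_iff_length_eq, Walk.length_reverse]
    omega
  obtain ⟨c, hbc, q, hq⟩ := Walk.not_nil_iff.mp hnotnil
  rw [hq] at hrp
  have hqpath : q.IsPath := ((Walk.cons_isPath_iff _ _).mp hrp).1
  have hbq : b ∉ q.support := ((Walk.cons_isPath_iff _ _).mp hrp).2
  have hrlen : (Walk.cons hbc q).length = k := by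
    rw [← hq, Walk.length_reverse, hplen]
  refine ⟨b, c, hbc, ?_⟩
  intro z hz
  by_contra hzc
  by_cases hzs : z ∈ (Walk.cons hbc q).support
  · -- build a cycle
    have hzb : z ≠ b := fun h => G.irrefl (h ▸ hz)
    set t := (Walk.cons hbc q).takeUntil z hzs with ht
    have htp : t.IsPath := hrp.takeUntil hzs
    have hedge : s(z, b) ∉ t.edges := by
      intro hmem
      have hmem' : s(z, b) ∈ (Walk.cons hbc q).edges :=
        Walk.edges_takeUntil_subset _ hzs hmem
      rw [Walk.edges_cons] at hmem'
      rcases List.mem_cons.mp hmem' with h | h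
      · rw [Sym2.eq_iff] at h
        rcases h with ⟨h1, h2⟩ | ⟨h1, h2⟩
        · exact hzb h1
        · exact hzc h1
      · exact hbq (Walk.snd_mem_support_of_mem_edges q h)
    have : (Walk.cons hz.symm t).IsCycle :=
      (Walk.cons_isCycle_iff t hz.symm).mpr ⟨htp, hedge⟩
    exact hac _ this
  · -- extend the path
    have : P (k + 1) := by
      refine ⟨z, a, Walk.cons hz.symm (Walk.cons hbc q), ?_, by simp [hrlen]⟩
      rw [Walk.cons_isPath_iff _ _]
      exact ⟨hrp, hzs⟩
    have := Nat.le_findGreatest (hbound _ this).le this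
    omega

lemma pm_of_seq [Fintype V] (G : SimpleGraph V) (L : List V) (hseq : isTDSeq G L)
    (hlen : L.length = Fintype.card V) :
    ∃ f : V → V, (∀ v, f (f v) = v) ∧ (∀ v, G.Adj v (f v)) := by
  classical
  obtain ⟨hnd, -, hstep⟩ := hseq
  choose w hadj hpriv using hstep
  have hmemtake : ∀ (i j : ℕ) (hi : i < L.length), i < j → L[i] ∈ L.take j := by
    intro i j hi hij
    have h1 : (L.take j)[i]? = L[i]? := List.getElem?_take_of_lt hij
    rw [List.getElem?_eq_getElem hi] at h1
    exact List.mem_of_getElem? h1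
  let W : Fin L.length → V := fun i => w i i.isLt
  have hWne : ∀ i j : Fin L.length, i < j → W i ≠ W j := by
    intro i j hij heq
    refine hpriv j j.isLt L[(i:ℕ)] (hmemtake _ _ i.isLt hij) ?_
    have h0 : G.Adj L[(i:ℕ)] (W i) := hadj i i.isLt
    rw [heq] at h0
    exact h0
  have hWinj : Function.Injective W := by
    intro i j h
    rcases lt_trichotomy i j with hc | hc | hc
    · exact absurd h (hWne i j hc)
    · exact hc
    · exact absurd h.symm (hWne j i hc)
  have hWbij : Function.Bijective W :=
    (Fintype.bijective_iff_injective_and_card W).mpr ⟨hWinj, by simpa using hlen⟩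
  let eW := Equiv.ofBijective W hWbij
  let gL : Fin L.length → V := fun i => L[(i : ℕ)]
  have hgLinj : Function.Injective gL := by
    intro i j h
    exact Fin.ext (List.nodup_iff_injective_get.mp hnd (by
      simpa [List.get_eq_getElem] using h) ▸ rfl)
  have hgLbij : Function.Bijective gL :=
    (Fintype.bijective_iff_injective_and_card gL).mpr ⟨hgLinj, by simpa using hlen⟩
  let eL := Equiv.ofBijective gL hgLbij
  let f : V → V := fun x => gL (eW.symm x)
  have hWf : ∀ x, W (eW.symm x) = x := fun x => eW.apply_symm_apply x
  have hfadj : ∀ x, G.Adj (f x) x := by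
    intro x
    have h0 : G.Adj (gL (eW.symm x)) (W (eW.symm x)) := hadj _ _
    rw [hWf] at h0
    exact h0
  have hmin : ∀ (x : V) (j : Fin L.length), G.Adj (gL j) x → eW.symm x ≤ j := by
    intro x j hadjx
    by_contra hlt
    push_neg at hlt
    have h0 : G.Adj (gL j) (W (eW.symm x)) := by rw [hWf]; exact hadjx
    exact hpriv (eW.symm x) (eW.symm x).isLt (gL j) (hmemtake _ _ j.isLt hlt) h0
  have hfinj : Function.Injective f := fun a b h =>
    eW.symm.injective (hgLinj h)
  have hinv : ∀ v, f (f v) = v := by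
    have main : ∀ k, ∀ v : V, ((eL.symm v : Fin L.length) : ℕ) = k → f (f v) = v := by
      intro k
      induction k using Nat.strong_induction_on with
      | _ k IH =>
        intro v hk
        by_contra hne
        have hv : gL (eL.symm v) = v := eL.apply_symm_apply v
        have h1 : G.Adj (gL (eL.symm v)) (f v) := by rw [hv]; exact (hfadj v).symm
        have hmin1 : eW.symm (f v) ≤ eL.symm v := hmin (f v) (eL.symm v) h1
        have hx : eL.symm (f (f v)) = eW.symm (f v) := by
          show eL.symm (gL (eW.symm (f v))) = _
          exact eL.symm_apply_apply _
        have hlt : ((eL.symm (f (f v)) : Fin L.length) : ℕ) < k := by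
          rw [hx, ← hk]
          rcases lt_or_eq_of_le hmin1 with h | h
          · exact h
          · exfalso
            apply hne
            have h2 : gL (eW.symm (f v)) = gL (eL.symm v) := by rw [h]
            rw [hv] at h2
            exact h2
        have hIH : f (f (f (f v))) = f (f v) := IH _ hlt (f (f v)) rfl
        have h2 : f (f (f v)) = f v := hfinj hIH
        exact hne (hfinj h2)
    intro v
    exact main _ v rfl
  exact ⟨f, hinv, fun v => (hfadj v).symm⟩

lemma seq_of_forest_pm : ∀ (n : ℕ) {α : Type*} [Fintype α] (G : SimpleGraph α),
    G.IsAcyclic → ∀ f : α → α, (∀ v, f (f v) = v) → (∀ v, G.Adj v (f v)) →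
    Fintype.card α = n → ∃ L : List α, isTDSeq G L ∧ L.length = n := by
  intro n
  induction n using Nat.strong_induction_on with
  | _ n IH =>
    intro α _ G hac f hinv hadj hcard
    classical
    rcases Nat.eq_zero_or_pos n with hn0 | hnpos
    · subst hn0
      haveI : IsEmpty α := Fintype.card_eq_zero_iff.mp hcard
      refine ⟨[], ⟨List.nodup_nil, fun v => isEmptyElim v, ?_⟩, rfl⟩
      intro i hi
      simp at hi
    · haveI : Nonempty α := Fintype.card_pos_iff.mp (hcard ▸ hnpos)
      obtain ⟨u, v, huv, hu⟩ := exists_leaf G hac (fun x => ⟨f x, hadj x⟩)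
      have hfu : f u = v := hu (f u) (hadj u)
      have huv_ne : u ≠ v := huv.ne
      have hfv : f v = u := by rw [← hfu, hinv u]
      have hfinj : Function.Injective f := Function.Involutive.injective hinv
      have hn2 : 2 ≤ n := by
        have := Fintype.one_lt_card_iff_nontrivial.mpr ⟨u, v, huv_ne⟩
        omega
      -- the smaller graph
      let β := {x : α // x ≠ u ∧ x ≠ v}
      let G' : SimpleGraph β := G.comap (fun x : β => x.val)
      have hac' : G'.IsAcyclic := by
        intro x c hc
        let hom : G' →g G := ⟨fun x : β => x.val, fun {a b} h => h⟩
        have hinj : Function.Injective hom := Subtype.val_injective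
        exact hac _ ((SimpleGraph.Walk.map_isCycle_iff_of_injective hinj).mpr hc)
      have hfne : ∀ x : β, f x.val ≠ u ∧ f x.val ≠ v := by
        intro x
        constructor
        · intro h; exact x.2.2 (hfinj (h.trans hfv.symm))
        · intro h; exact x.2.1 (hfinj (h.trans hfu.symm))
      let f' : β → β := fun x => ⟨f x.val, hfne x⟩
      have hinv' : ∀ x, f' (f' x) = x := fun x => Subtype.ext (hinv x.val)
      have hadj' : ∀ x, G'.Adj x (f' x) := fun x => hadj x.val
      have hcardβ : Fintype.card β = n - 2 := by
        show Fintype.card {x : α // x ≠ u ∧ x ≠ v} = n - 2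
        rw [Fintype.card_subtype]
        have h2 : (Finset.univ.filter fun x : α => x ≠ u ∧ x ≠ v) = (Finset.univ \ {u, v}) := by
          ext x
          simp [not_or]
        rw [h2, Finset.card_sdiff_of_subset (Finset.subset_univ _), Finset.card_univ, hcard]
        have : ({u, v} : Finset α).card = 2 := by
          rw [Finset.card_insert_of_notMem (by simp [huv_ne]), Finset.card_singleton]
        rw [this]
      obtain ⟨L', hseq', hlen'⟩ := IH (n - 2) (by omega) G' hac' f' hinv' hadj' hcardβ
      obtain ⟨hnd', htd', hstep'⟩ := hseq'
      have hmemL' : ∀ x : β, x ∈ L' := by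
        intro x
        have h1 : L'.toFinset = Finset.univ := Finset.eq_univ_of_card _ (by
          rw [List.toFinset_card_of_nodup hnd', hlen', hcardβ])
        have := Finset.mem_univ x
        rw [← h1, List.mem_toFinset] at this
        exact this
      set M : List α := L'.map Subtype.val with hM
      have hMlen : M.length = n - 2 := by rw [hM, List.length_map, hlen']
      have hMne : ∀ y ∈ M, y ≠ u ∧ y ≠ v := by
        intro y hy
        obtain ⟨x, -, rfl⟩ := List.mem_map.mp hy
        exact x.2
      refine ⟨u :: (M ++ [v]), ⟨?_, ?_, ?_⟩, by simp [hMlen]; omega⟩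
      · -- Nodup
        rw [List.nodup_cons]
        constructor
        · intro h
          rcases List.mem_append.mp h with h | h
          · exact (hMne u h).1 rfl
          · exact huv_ne (List.mem_singleton.mp h)
        · rw [List.nodup_append]
          refine ⟨hnd'.map Subtype.val_injective, List.nodup_singleton v, ?_⟩
          intro y hy z hz
          exact fun h => (hMne y hy).2 (h.trans (List.mem_singleton.mp hz))
      · -- isTDSet
        intro x
        refine ⟨f x, ?_, hadj x⟩
        show f x ∈ u :: (M ++ [v])
        by_cases h1 : f x = u
        · rw [h1]; exact List.mem_cons_self
        by_cases h2 : f x = v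
        · rw [h2]
          exact List.mem_cons_of_mem _ (List.mem_append.mpr (Or.inr (List.mem_singleton_self v)))
        · have : (⟨f x, h1, h2⟩ : β) ∈ L' := hmemL' _
          exact List.mem_cons_of_mem _ (List.mem_append.mpr
            (Or.inl (List.mem_map_of_mem (f := Subtype.val) this)))
      · -- sequence condition
        intro i hi
        cases i with
        | zero =>
          refine ⟨v, by simpa using huv, ?_⟩
          intro y hy
          simp at hy
        | succ j =>
          have hilen : j + 1 < M.length + 2 := by
            simpa [List.length_cons, List.length_append] using hi
          by_cases hj : j < M.length
          · -- middle segment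
            have hjL : j < L'.length := by rw [hlen', ← hMlen]; exact hj
            obtain ⟨w', hw1, hw2⟩ := hstep' j hjL
            have hgi : (u :: (M ++ [v]))[j+1]'hi = (L'[j]'hjL).val := by
              rw [List.getElem_cons_succ, List.getElem_append_left hj]
              simp only [hM, List.getElem_map]
            refine ⟨w'.val, ?_, ?_⟩
            · rw [hgi]; exact hw1
            · intro y hy
              rw [List.take_succ_cons] at hy
              rcases List.mem_cons.mp hy with rfl | hy'
              · intro hadj_y
                exact w'.2.2 (hu _ hadj_y)
              · have htake : (M ++ [v]).take j = M.take j := by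
                  rw [List.take_append]
                  have h0 : j - M.length = 0 := by omega
                  rw [h0]
                  simp
                rw [htake, hM, ← List.map_take] at hy'
                obtain ⟨y', hy'', rfl⟩ := List.mem_map.mp hy'
                exact hw2 y' hy''
          · -- last element v
            have hjeq : j = M.length := by omega
            subst hjeq
            have hgi : (u :: (M ++ [v]))[M.length+1]'hi = v := by
              rw [List.getElem_cons_succ, List.getElem_append_right (le_refl M.length)]
              simp
            refine ⟨u, by rw [hgi]; exact huv.symm, ?_⟩
            intro y hy
            rw [List.take_succ_cons] at hy
            have htake : (M ++ [v]).take M.length = M := by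
              rw [List.take_append]
              simp
            rw [htake] at hy
            rcases List.mem_cons.mp hy with rfl | hy'
            · exact fun h => G.irrefl h
            · intro h
              exact (hMne y hy').2 (hu y h.symm)

/-- A tree of order `n` has a total dominating sequence of length `n` iff it has a
perfect matching. -/
theorem stmt16 [Fintype V] (G : SimpleGraph V) (hT : G.IsTree) :
    (∃ L : List V, isTDSeq G L ∧ L.length = Fintype.card V) ↔
    ∃ M : SimpleGraph.Subgraph G, M.IsPerfectMatching := by
  constructor
  · rintro ⟨L, hL, hlen⟩
    obtain ⟨f, hinv, hadj⟩ := pm_of_seq G L hL hlen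
    refine ⟨⟨Set.univ, fun a b => f a = b ∨ f b = a, ?_, fun {v w} _ => trivial, ?_⟩, ?_⟩
    · rintro v w (rfl | h)
      · exact (hadj v)
      · rw [← h]
        exact (hadj w).symm
    · constructor; rintro a b (h | h)
      · exact Or.inr h
      · exact Or.inl h
    · rw [SimpleGraph.Subgraph.isPerfectMatching_iff]
      intro v
      refine ⟨f v, Or.inl rfl, ?_⟩
      rintro y (h | h)
      · exact h.symm
      · rw [← hinv y, h]
  · rintro ⟨M, hM⟩
    have h := SimpleGraph.Subgraph.isPerfectMatching_iff.mp hM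
    choose f hf hfu using h
    have hinv : ∀ v, f (f v) = v := fun v => (hfu (f v) v (hf v).symm).symm
    have hadj : ∀ v, G.Adj v (f v) := fun v => M.adj_sub (hf v)
    exact seq_of_forest_pm (Fintype.card V) G hT.2 f hinv hadj rfl
end

section
/- If G is an isolate-free graph and A is an open-open irredundant set of G, then the vertices of A can be ordered into a sequence that is the initial segment of some total dominating sequence of G; consequently OOIR(G) ≤ γ_gr^t(G). -/
variable {V : Type*}

lemma extend_goodSeq [Fintype V] [DecidableEq V] (G : SimpleGraph V)
    (hG : ∀ v : V, ∃ w, G.Adj v w) :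
    ∀ (k : ℕ) (L : List V), Fintype.card V ≤ L.length + k → L.Nodup →
      (∀ (i : ℕ) (h : i < L.length), ∃ w, G.Adj L[i] w ∧ ∀ u ∈ L.take i, ¬ G.Adj u w) →
      ∃ L', isTDSeq G L' ∧ L <+: L' := by
  intro k
  induction k with
  | zero =>
    intro L hk hnd hseq
    refine ⟨L, ⟨hnd, ?_, hseq⟩, List.prefix_refl L⟩
    have hall : ∀ v : V, v ∈ L := by
      have hle : L.length ≤ Fintype.card V := List.Nodup.length_le_card hnd
      have h1 : L.toFinset = Finset.univ := by
        apply Finset.eq_univ_of_card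
        rw [List.toFinset_card_of_nodup hnd]
        omega
      intro v
      rw [← List.mem_toFinset, h1]
      exact Finset.mem_univ v
    intro v
    obtain ⟨w, hw⟩ := hG v
    exact ⟨w, hall w, hw⟩
  | succ k ih =>
    intro L hk hnd hseq
    by_cases hTD : isTDSet G {v | v ∈ L}
    · exact ⟨L, ⟨hnd, hTD, hseq⟩, List.prefix_refl L⟩
    · unfold isTDSet at hTD
      push_neg at hTD
      obtain ⟨x, hx⟩ := hTD
      obtain ⟨y, hy⟩ := hG x
      have hyL : y ∉ L := fun h => hx y h hy
      have hnd' : (L ++ [y]).Nodup := by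
        simp [List.nodup_append, hnd, hyL]
        rintro a ha rfl
        exact hyL ha
      have hseq' : ∀ (i : ℕ) (h : i < (L ++ [y]).length),
          ∃ w, G.Adj (L ++ [y])[i] w ∧ ∀ u ∈ (L ++ [y]).take i, ¬ G.Adj u w := by
        intro i hi
        rcases lt_or_ge i L.length with h | h
        · obtain ⟨w, hw1, hw2⟩ := hseq i h
          refine ⟨w, ?_, ?_⟩
          · rwa [List.getElem_append_left h]
          · intro u hu
            apply hw2
            rwa [List.take_append_of_le_length h.le] at hu
        · have hi' : i = L.length := by
            simp only [List.length_append, List.length_cons, List.length_nil] at hi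
            omega
          subst hi'
          refine ⟨x, ?_, ?_⟩
          · have hgy : (L ++ [y])[L.length] = y := by simp
            rw [hgy]
            exact hy.symm
          · intro u hu
            rw [List.take_left] at hu
            intro had
            exact hx u hu had.symm
      obtain ⟨L', hL', hpre⟩ := ih (L ++ [y])
        (by simp only [List.length_append, List.length_cons, List.length_nil]; omega) hnd' hseq'
      exact ⟨L', hL', (List.prefix_append L [y]).trans hpre⟩

lemma key_ooirr [Fintype V] [DecidableEq V] (G : SimpleGraph V)
    (hG : ∀ v : V, ∃ w, G.Adj v w) (A : Finset V) (hA : isOOIrr G ↑A) :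
    ∃ L : List V, isTDSeq G L ∧ (L.take A.card).toFinset = A := by
  have hseq : ∀ (i : ℕ) (h : i < A.toList.length),
      ∃ w, G.Adj A.toList[i] w ∧ ∀ u ∈ A.toList.take i, ¬ G.Adj u w := by
    intro i hi
    have hmem : A.toList[i] ∈ A := by
      rw [← Finset.mem_toList]
      exact List.getElem_mem hi
    obtain ⟨w, hw1, hw2⟩ := hA A.toList[i] hmem
    refine ⟨w, hw1, ?_⟩
    intro u hu
    obtain ⟨j, hj, hju⟩ := List.getElem_of_mem hu
    rw [List.length_take] at hj
    have hji : j < i := by omega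
    have hjlen : j < A.toList.length := by omega
    rw [List.getElem_take] at hju
    have humem : u ∈ A := by
      rw [← hju, ← Finset.mem_toList]
      exact List.getElem_mem _
    apply hw2 u humem
    rw [← hju]
    intro heq
    have := (List.Nodup.getElem_inj_iff A.nodup_toList).mp heq
    omega
  obtain ⟨L, hL, hpre⟩ := extend_goodSeq G hG (Fintype.card V) A.toList
    (Nat.le_add_left _ _) A.nodup_toList hseq
  refine ⟨L, hL, ?_⟩
  have htake : L.take A.toList.length = A.toList := (List.prefix_iff_eq_take.mp hpre).symm
  rw [Finset.length_toList] at htake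
  rw [htake, Finset.toList_toFinset]

/-- In an isolate-free graph, any open-open irredundant set can be ordered into the
initial segment of a total dominating sequence; consequently `OOIR(G) ≤ γ_gr^t(G)`. -/
theorem stmt17 [Fintype V] [DecidableEq V] (G : SimpleGraph V)
    (hG : ∀ v : V, ∃ w, G.Adj v w) (A : Finset V) (hA : isOOIrr G ↑A) :
    (∃ L : List V, isTDSeq G L ∧ (L.take A.card).toFinset = A) ∧
    ooirNum G ≤ grundyTD G := by
  have hbddG : BddAbove {n | ∃ L : List V, isTDSeq G L ∧ L.length = n} := by
    refine ⟨Fintype.card V, ?_⟩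
    rintro n ⟨L, hL, rfl⟩
    exact List.Nodup.length_le_card hL.1
  constructor
  · exact key_ooirr G hG A hA
  · apply csSup_le
    · exact ⟨0, ∅, by simp [isOOIrr], by simp⟩
    · rintro n ⟨S, hS, rfl⟩
      obtain ⟨L, hL, hS'⟩ := key_ooirr G hG S hS
      have hcard : S.card ≤ L.length := by
        have h1 : S.card = (L.take S.card).toFinset.card := by rw [hS']
        have h2 : (L.take S.card).toFinset.card ≤ (L.take S.card).length :=
          List.toFinset_card_le _
        have h3 : (L.take S.card).length = min S.card L.length := List.length_take
        omega
      exact hcard.trans (le_csSup hbddG ⟨L, hL, rfl⟩)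
end
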